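/- arXiv:2002.04443 — 9 statements merged into one kernel-verified Lean document; each statement's English description precedes it below -/
import Mathlib

section
/- Let G be a finite group and p a prime dividing |G|. Then the number of conjugacy classes of p-elements of G is at most the number of conjugacy classes of a Sylow p-subgroup P of G, which in turn is at most |P|. -/
open Pointwise


/-- The number of conjugacy classes of `p`-elements of `G`. -/
noncomputable def kp (p : ℕ) (G : Type*) [Group G] : ℕ :=
  Nat.card {c : ConjClasses G // ∀ g ∈ c.carrier, ∃ n : ℕ, orderOf g = p ^ n}

theorem stmt_0 {G : Type*} [Group G] [Finite G] (p : ℕ) [Fact p.Prime]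
    (hdvd : p ∣ Nat.card G) (P : Sylow p G) :
    kp p G ≤ Nat.card (ConjClasses ↥(P : Subgroup G)) ∧
      Nat.card (ConjClasses ↥(P : Subgroup G)) ≤ Nat.card ↥(P : Subgroup G) := by
  constructor
  · have hP : IsPGroup p ↥(P : Subgroup G) := P.isPGroup'
    have hf : ∀ c : ConjClasses ↥(P : Subgroup G),
        ∀ g ∈ (c.map (P : Subgroup G).subtype).carrier, ∃ n : ℕ, orderOf g = p ^ n := by
      intro c g hg
      obtain ⟨x, rfl⟩ := c.exists_rep
      have hmk : (ConjClasses.mk x).map (P : Subgroup G).subtype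
          = ConjClasses.mk (x : G) := rfl
      rw [hmk, ConjClasses.mem_carrier_iff_mk_eq, ConjClasses.mk_eq_mk_iff_isConj] at hg
      obtain ⟨a, ha⟩ := hg.symm
      obtain ⟨n, hn⟩ := IsPGroup.iff_orderOf.mp hP x
      exact ⟨n, by rw [← SemiconjBy.orderOf_eq _ ha, Subgroup.orderOf_coe, hn]⟩
    refine Nat.card_le_card_of_surjective
      (fun c => ⟨c.map (P : Subgroup G).subtype, hf c⟩) ?_
    rintro ⟨c, hc⟩
    obtain ⟨g, rfl⟩ := c.exists_rep
    obtain ⟨n, hn⟩ := hc g ConjClasses.mem_carrier_mk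
    -- g generates a p-group
    have hzp : IsPGroup p (Subgroup.zpowers g) := by
      intro h
      refine ⟨n, ?_⟩
      obtain ⟨k, hk⟩ := Subgroup.mem_zpowers_iff.mp h.2
      have : (h : G) ^ p ^ n = 1 := by
        rw [← hk, ← zpow_natCast, ← zpow_mul, mul_comm, zpow_mul, zpow_natCast, ← hn,
          pow_orderOf_eq_one, one_zpow]
      exact Subtype.ext (by simpa using this)
    obtain ⟨Q, hQ⟩ := hzp.exists_le_sylow
    obtain ⟨x, hx⟩ := MulAction.exists_smul_eq G Q P
    have hgQ : g ∈ (Q : Subgroup G) := hQ (Subgroup.mem_zpowers g)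
    have hmem : x * g * x⁻¹ ∈ (P : Subgroup G) := by
      rw [← hx]
      have : x * g * x⁻¹ ∈ MulAut.conj x • (Q : Subgroup G) :=
        Subgroup.smul_mem_pointwise_smul g (MulAut.conj x) _ hgQ
      simpa [Sylow.smul_def, Sylow.pointwise_smul_def] using this
    refine ⟨ConjClasses.mk (⟨x * g * x⁻¹, hmem⟩ : (P : Subgroup G)), ?_⟩
    refine Subtype.ext ?_
    show ConjClasses.mk (x * g * x⁻¹ : G) = ConjClasses.mk g
    rw [ConjClasses.mk_eq_mk_iff_isConj]
    exact (isConj_iff.mpr ⟨x, rfl⟩).symm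
  · exact Nat.card_le_card_of_surjective ConjClasses.mk fun c => c.exists_rep
end

section
/- Let G be a finite group with Sylow p-subgroup P and let x ∈ P satisfy x^G ∩ P = {x}. Then C_G(x) controls p-fusion in G: P ≤ C_G(x), and whenever y, y^g ∈ P for some g ∈ G, there exists h ∈ C_G(x) with y^g = y^h. -/
private lemma zpowers_isPGroup {H : Type*} [Group H] {p : ℕ} (a : H) (k : ℕ)
    (ha : a ^ p ^ k = 1) : IsPGroup p (Subgroup.zpowers a) := by
  rintro ⟨g, n, rfl⟩
  refine ⟨k, ?_⟩
  ext
  push_cast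
  rw [← zpow_natCast, ← zpow_mul, mul_comm, zpow_mul, zpow_natCast, ha, one_zpow]

theorem stmt_3 {G : Type*} [Group G] [Finite G] (p : ℕ) [Fact p.Prime]
    (P : Sylow p G) (x : G) (hx : x ∈ (P : Subgroup G))
    (h : {y : G | IsConj x y} ∩ (P : Subgroup G) = {x}) :
    (P : Subgroup G) ≤ Subgroup.centralizer {x} ∧
      ∀ y g : G, y ∈ (P : Subgroup G) → g⁻¹ * y * g ∈ (P : Subgroup G) →
        ∃ h ∈ Subgroup.centralizer {x}, g⁻¹ * y * g = h⁻¹ * y * h := by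
  have key : ∀ a : G, a⁻¹ * x * a ∈ (P : Subgroup G) → a ∈ Subgroup.centralizer {x} := by
    intro a ha
    have hmem : a⁻¹ * x * a ∈ ({y : G | IsConj x y} ∩ (P : Subgroup G)) :=
      ⟨isConj_iff.mpr ⟨a⁻¹, by group⟩, ha⟩
    rw [h, Set.mem_singleton_iff] at hmem
    rw [Subgroup.mem_centralizer_singleton_iff]
    have : x * a = a * x := by
      calc x * a = a * (a⁻¹ * x * a) := by group
      _ = a * x := by rw [hmem]
    exact this.symm
  have part1 : (P : Subgroup G) ≤ Subgroup.centralizer {x} := fun u hu =>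
    key u (Subgroup.mul_mem _ (Subgroup.mul_mem _ (Subgroup.inv_mem _ hu) hx) hu)
  refine ⟨part1, fun y g hy hz => ?_⟩
  set z : G := g⁻¹ * y * g with hzdef
  set K : Subgroup G := Subgroup.centralizer {z} with hK
  -- x^(p^k) = 1
  obtain ⟨k, hk⟩ := P.2 ⟨x, hx⟩
  have hxpk : x ^ p ^ k = 1 := by simpa using congrArg Subtype.val hk
  -- x ∈ K
  have hxK : x ∈ K := by
    have := part1 hz
    rw [Subgroup.mem_centralizer_singleton_iff] at this ⊢
    exact this.symm
  -- x' := g⁻¹ x g ∈ K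
  have hxy : x * y = y * x := by
    have := part1 hy
    rw [Subgroup.mem_centralizer_singleton_iff] at this
    exact this.symm
  have hx'K : g⁻¹ * x * g ∈ K := by
    rw [Subgroup.mem_centralizer_singleton_iff, hzdef]
    calc g⁻¹ * x * g * (g⁻¹ * y * g) = g⁻¹ * (x * y) * g := by group
    _ = g⁻¹ * (y * x) * g := by rw [hxy]
    _ = g⁻¹ * y * g * (g⁻¹ * x * g) := by group
  -- Sylows of K containing x and x'
  obtain ⟨R, hR⟩ := (zpowers_isPGroup (p := p) (⟨x, hxK⟩ : K) k
    (by rw [Subtype.ext_iff]; push_cast; exact hxpk)).exists_le_sylow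
  have hx'pk : (g⁻¹ * x * g) ^ p ^ k = 1 := by
    have e : g⁻¹ * x * g = g⁻¹ * x * (g⁻¹)⁻¹ := by rw [inv_inv]
    rw [e, conj_pow, hxpk]; group
  obtain ⟨S, hS⟩ := (zpowers_isPGroup (p := p) (⟨g⁻¹ * x * g, hx'K⟩ : K) k
    (by rw [Subtype.ext_iff]; push_cast; exact hx'pk)).exists_le_sylow
  obtain ⟨c, hc⟩ := MulAction.exists_smul_eq K R S
  -- embed R into a Sylow of G
  obtain ⟨P', hP'⟩ := (R.2.map K.subtype).exists_le_sylow
  obtain ⟨d, hd⟩ := MulAction.exists_smul_eq G P P'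
  -- x ∈ P' = d • P, so d centralizes x
  have hxP' : x ∈ (P' : Subgroup G) :=
    hP' ⟨⟨x, hxK⟩, hR (Subgroup.mem_zpowers _), rfl⟩
  have hdC : d ∈ Subgroup.centralizer {x} := by
    apply key
    rw [← hd] at hxP'
    rwa [Sylow.coe_subgroup_smul, Subgroup.mem_pointwise_smul_iff_inv_smul_mem] at hxP'
  -- c⁻¹ x' c ∈ R (in K), hence its image is in P' = d • P
  have hx'S : (⟨g⁻¹ * x * g, hx'K⟩ : K) ∈ (S : Subgroup K) := hS (Subgroup.mem_zpowers _)
  rw [← hc, Sylow.coe_subgroup_smul, Subgroup.mem_pointwise_smul_iff_inv_smul_mem] at hx'S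
  have h2 : (c : G)⁻¹ * (g⁻¹ * x * g) * c ∈ (P' : Subgroup G) :=
    hP' ⟨_, hx'S, rfl⟩
  have hgcdC : g * c * d ∈ Subgroup.centralizer {x} := by
    have := key (g * (c : G) * d) ?_
    · exact this
    · rw [← hd] at h2
      rw [Sylow.coe_subgroup_smul, Subgroup.mem_pointwise_smul_iff_inv_smul_mem] at h2
      convert h2 using 1
      simp [MulAut.smul_def]
      group
  -- final: h := g * c
  refine ⟨g * c, ?_, ?_⟩
  · have : g * (c : G) = (g * c * d) * d⁻¹ := by group
    rw [this]
    exact Subgroup.mul_mem _ hgcdC (Subgroup.inv_mem _ hdC)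
  · have hcz : (c : G) * z = z * c := Subgroup.mem_centralizer_singleton_iff.mp c.2
    have e1 : (c : G)⁻¹ * (z * (c : G)) = z := by rw [← hcz]; group
    calc g⁻¹ * y * g = z := rfl
    _ = (c : G)⁻¹ * (z * (c : G)) := e1.symm
    _ = (g * c)⁻¹ * y * (g * c) := by rw [hzdef]; group
end

section
/- Let G be a finite group with Sylow p-subgroup P and x ∈ P. If x^G ∩ P = {x}, then for every y in the cyclic subgroup generated by x, we also have y^G ∩ P = {y}. -/
open Subgroup Pointwise

section helpers
variable {G : Type*} [Group G] [Finite G]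

private lemma myCardLt {H K : Subgroup G} (h : H < K) : Nat.card H < Nat.card K := by
  have h1 : (H : Set G) ⊂ (K : Set G) := by
    rw [Set.ssubset_iff_subset_ne]
    exact ⟨h.le, fun he => h.ne (SetLike.ext' he)⟩
  have := Set.ncard_lt_ncard h1 (Set.toFinite _)
  rwa [← Nat.card_coe_set_eq, ← Nat.card_coe_set_eq] at this

private lemma myCardLe (H : Subgroup G) : Nat.card H ≤ Nat.card G :=
  Nat.le_of_dvd Nat.card_pos H.card_subgroup_dvd_card

private lemma myEqOfLe {H K : Subgroup G} (hle : H ≤ K) (h : Nat.card K ≤ Nat.card H) : H = K := by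
  by_contra hne
  exact absurd h (not_le.mpr (myCardLt (lt_of_le_of_ne hle hne)))

private lemma myNormGrow {p : ℕ} [Fact p.Prime] {S R : Subgroup G} (hS : IsPGroup p S)
    (h : R < S) :
    Nat.card R < Nat.card (S ⊓ (normalizer (R : Set G)) : Subgroup G) := by
  have hle : R ≤ S := h.le
  set Rs := R.subgroupOf S with hRsdef
  haveI : Group.IsNilpotent ↥S := hS.isNilpotent
  have hlt : Rs < ⊤ := by
    rcases SetLike.exists_of_lt h with ⟨a, haS, haR⟩
    refine lt_of_le_of_ne le_top ?_
    intro he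
    have : (⟨a, haS⟩ : S) ∈ Rs := by rw [he]; exact mem_top _
    exact haR (mem_subgroupOf.mp this)
  have hcond := normalizerCondition_of_isNilpotent (G := ↥S) Rs hlt
  have hcard : Nat.card Rs < Nat.card (normalizer (Rs : Set S)) := myCardLt hcond
  have e1 : Nat.card Rs = Nat.card R := Nat.card_congr (subgroupOfEquivOfLe hle).toEquiv
  have hmap : Subgroup.map S.subtype (normalizer (Rs : Set S)) ≤ S ⊓ (normalizer (R : Set G)) := by
    rintro - ⟨s, hs0, rfl⟩
    have hs : s ∈ (normalizer (Rs : Set S)) := hs0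
    refine ⟨s.2, ?_⟩
    show S.subtype s ∈ (normalizer (R : Set G))
    rw [mem_normalizer_iff]
    intro b
    constructor
    · intro hb
      have hbS : b ∈ S := hle hb
      have h1 : (⟨b, hbS⟩ : S) ∈ Rs := mem_subgroupOf.mpr hb
      have h2 := (mem_normalizer_iff.mp hs ⟨b, hbS⟩).mp h1
      have h3 := mem_subgroupOf.mp h2
      simpa using h3
    · intro hb
      have hbS : b ∈ S := by
        have h4 : ((S.subtype s) * b * (S.subtype s)⁻¹ : G) ∈ S := hle hb
        have h5 : (b : G) = (S.subtype s)⁻¹ * ((S.subtype s) * b * (S.subtype s)⁻¹) *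
            (S.subtype s) := by group
        rw [h5]
        exact mul_mem (mul_mem (inv_mem s.2) h4) s.2
      have h1 : s * (⟨b, hbS⟩ : S) * s⁻¹ ∈ Rs := by
        rw [mem_subgroupOf]
        simpa using hb
      exact mem_subgroupOf.mp ((mem_normalizer_iff.mp hs ⟨b, hbS⟩).mpr h1)
  have e2 : Nat.card (Subgroup.map S.subtype (normalizer (Rs : Set S))) = Nat.card (normalizer (Rs : Set S)) :=
    (Nat.card_congr (equivMapOfInjective _ _ S.subtype_injective).toEquiv).symm
  calc Nat.card R = Nat.card Rs := e1.symm
    _ < Nat.card (normalizer (Rs : Set S)) := hcard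
    _ = Nat.card (Subgroup.map S.subtype (normalizer (Rs : Set S))) := e2.symm
    _ ≤ Nat.card (S ⊓ (normalizer (R : Set G)) : Subgroup G) := Subgroup.card_le_of_le hmap

private lemma mySylowCard {p : ℕ} [Fact p.Prime] (P Q : Sylow p G) :
    Nat.card (P : Subgroup G) = Nat.card (Q : Subgroup G) := by
  obtain ⟨g, hg⟩ := MulAction.exists_smul_eq G P Q
  have e : Nat.card ((P : Subgroup G)) = Nat.card ((g • P : Sylow p G) : Subgroup G) := by
    rw [Sylow.coe_subgroup_smul]
    exact Nat.card_congr (equivSMul (MulAut.conj g) (P : Subgroup G)).toEquiv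
  rw [e, hg]

private lemma mySmulMem {p : ℕ} [Fact p.Prime] (T : Sylow p G) (ν u : G) :
    u ∈ (((ν • T : Sylow p G)) : Subgroup G) ↔ ν⁻¹ * u * ν ∈ T := by
  rw [Sylow.coe_subgroup_smul, Subgroup.mem_pointwise_smul_iff_inv_smul_mem]
  rw [← map_inv MulAut.conj ν]
  rw [show ((MulAut.conj ν⁻¹) • u) = ν⁻¹ * u * (ν⁻¹)⁻¹ from rfl]
  rw [inv_inv]
  exact Iff.rfl

private lemma mySmulMem' {p : ℕ} [Fact p.Prime] (T : Sylow p G) (ν u : G) :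
    u ∈ (ν • T : Sylow p G) ↔ ν⁻¹ * u * ν ∈ T := mySmulMem T ν u

private lemma myConjPow (c a : G) (k : ℤ) : c * a ^ k * c⁻¹ = (c * a * c⁻¹) ^ k := by
  have := map_zpow (MulAut.conj c) a k
  simpa [MulAut.conj_apply] using this

private lemma myConjMem {H : Subgroup G} (hH : H.Normal) {a : G} (ha : a ∈ H) (c : G) :
    c * a * c⁻¹ ∈ H := hH.conj_mem a ha c

end helpers

section main

universe u

private theorem myAUX : ∀ (n : ℕ) (G : Type u) [Group G] [Finite G], Nat.card G ≤ n →
    ∀ (p : ℕ) [Fact p.Prime] (P : Sylow p G) (x : G), x ∈ (P : Subgroup G) →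
    (∀ g : G, g * x * g⁻¹ ∈ (P : Subgroup G) → g * x * g⁻¹ = x) →
    ∀ (k : ℤ) (Q : Sylow p G) (w g : G), w * x * w⁻¹ ∈ (Q : Subgroup G) →
      g * x ^ k * g⁻¹ ∈ (Q : Subgroup G) → g * x ^ k * g⁻¹ = w * x ^ k * w⁻¹ := by
  intro n
  induction n with
  | zero =>
      intro G _ _ hcard
      exact absurd (lt_of_lt_of_le Nat.card_pos hcard) (lt_irrefl 0)
  | succ n IHouter =>
      intro G iG fG hGcard p ip P x hx hiso k
      -- uniqueness of the conjugate of x in each Sylow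
      have hU : ∀ (Q : Sylow p G) (a b : G), a * x * a⁻¹ ∈ (Q : Subgroup G) →
          b * x * b⁻¹ ∈ (Q : Subgroup G) → a * x * a⁻¹ = b * x * b⁻¹ := by
        intro Q a b ha hb
        obtain ⟨h, hh⟩ := MulAction.exists_smul_eq G P Q
        have key : ∀ c : G, c * x * c⁻¹ ∈ (Q : Subgroup G) → c * x * c⁻¹ = h * x * h⁻¹ := by
          intro c hc
          rw [← hh] at hc
          rw [mySmulMem] at hc
          have hc2 : (h⁻¹ * c) * x * (h⁻¹ * c)⁻¹ ∈ (P : Subgroup G) := by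
            have : (h⁻¹ * c) * x * (h⁻¹ * c)⁻¹ = h⁻¹ * (c * x * c⁻¹) * h := by group
            rw [this]; exact hc
          have := hiso _ hc2
          have e : c * x * c⁻¹ = h * ((h⁻¹ * c) * x * (h⁻¹ * c)⁻¹) * h⁻¹ := by group
          rw [e, this]
        rw [key a ha, key b hb]
      have hEx : ∀ (Q : Sylow p G), ∃ a : G, a * x * a⁻¹ ∈ (Q : Subgroup G) := by
        intro Q
        obtain ⟨h, hh⟩ := MulAction.exists_smul_eq G P Q
        refine ⟨h, ?_⟩
        rw [← hh, mySmulMem]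
        have : h⁻¹ * (h * x * h⁻¹) * h = x := by group
        rw [this]; exact hx
      -- commuting: everything in Q commutes with the x-conjugate in Q
      have hZ : ∀ (Q : Sylow p G) (a : G), a * x * a⁻¹ ∈ (Q : Subgroup G) →
          ∀ u ∈ (Q : Subgroup G), Commute u (a * x * a⁻¹) := by
        intro Q a ha u hu
        obtain ⟨h, hh⟩ := MulAction.exists_smul_eq G P Q
        have hhx : h * x * h⁻¹ ∈ (Q : Subgroup G) := by
          rw [← hh, mySmulMem]
          have : h⁻¹ * (h * x * h⁻¹) * h = x := by group
          rw [this]; exact hx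
        have hax : a * x * a⁻¹ = h * x * h⁻¹ := hU Q a h ha hhx
        rw [← hh, mySmulMem] at hu
        have hu0 : (h⁻¹ * u * h) * x * (h⁻¹ * u * h)⁻¹ ∈ (P : Subgroup G) := by
          have h3 : h⁻¹ * u * h ∈ (P : Subgroup G) := hu
          exact mul_mem (mul_mem h3 hx) (inv_mem h3)
        have hcomm0 : (h⁻¹ * u * h) * x = x * (h⁻¹ * u * h) := by
          have := hiso _ hu0
          calc (h⁻¹ * u * h) * x = ((h⁻¹ * u * h) * x * (h⁻¹ * u * h)⁻¹) * (h⁻¹ * u * h) := by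
                group
            _ = x * (h⁻¹ * u * h) := by rw [this]
        rw [hax]
        show u * (h * x * h⁻¹) = (h * x * h⁻¹) * u
        calc u * (h * x * h⁻¹) = h * ((h⁻¹ * u * h) * x) * h⁻¹ := by group
          _ = h * (x * (h⁻¹ * u * h)) * h⁻¹ := by rw [hcomm0]
          _ = (h * x * h⁻¹) * u := by group
      -- the inner induction
      have INNER : ∀ (m : ℕ) (Q : Sylow p G) (w g : G), w * x * w⁻¹ ∈ (Q : Subgroup G) →
          g * x ^ k * g⁻¹ ∈ (Q : Subgroup G) →
          Nat.card G - Nat.card ((Q : Subgroup G) ⊓ centralizer {g * x ^ k * g⁻¹} : Subgroup G)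
            < m →
          g * x ^ k * g⁻¹ = w * x ^ k * w⁻¹ := by
        intro m
        induction m with
        | zero => intro Q w g _ _ hm; exact absurd hm (Nat.not_lt_zero _)
        | succ m IH =>
          intro Q w g hw hg hm
          set z := g * x ^ k * g⁻¹ with hzdef
          set xQ := w * x * w⁻¹ with hxQdef
          have hzQ : z ∈ (Q : Subgroup G) := hg
          have hzcent : z ∈ centralizer {z} := by
            rw [mem_centralizer_iff]
            intro a ha
            rw [Set.mem_singleton_iff] at ha
            subst ha
            rfl
          have hzR : z ∈ ((Q : Subgroup G) ⊓ centralizer {z} : Subgroup G) := ⟨hzQ, hzcent⟩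
          have hxQcent : xQ ∈ centralizer {z} := by
            rw [mem_centralizer_iff]
            intro a ha
            rw [Set.mem_singleton_iff] at ha
            subst ha
            exact (hZ Q w hw z hzQ).eq
          have hxQR : xQ ∈ ((Q : Subgroup G) ⊓ centralizer {z} : Subgroup G) := ⟨hw, hxQcent⟩
          set H : Subgroup G := centralizer {z} with hHdef
          set Pg : Subgroup G := MulAut.conj g • (P : Subgroup G) with hPgdef
          have hPgH : Pg ≤ H := by
            intro u hu
            rw [hPgdef, mem_pointwise_smul_iff_inv_smul_mem, ← map_inv MulAut.conj g] at hu
            have hu0 : g⁻¹ * u * g ∈ (P : Subgroup G) := by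
              have e : (MulAut.conj g⁻¹) • u = g⁻¹ * u * g := by
                rw [show ((MulAut.conj g⁻¹) • u) = g⁻¹ * u * (g⁻¹)⁻¹ from rfl, inv_inv]
              rwa [e] at hu
            have hc1 : Commute (g⁻¹ * u * g) x := by
              have h1 := hiso _ (mul_mem (mul_mem hu0 hx) (inv_mem hu0))
              show (g⁻¹ * u * g) * x = x * (g⁻¹ * u * g)
              calc (g⁻¹*u*g) * x = ((g⁻¹*u*g) * x * (g⁻¹*u*g)⁻¹) * (g⁻¹*u*g) := by group
                _ = x * (g⁻¹*u*g) := by rw [h1]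
            have hc2 : (g⁻¹*u*g) * x ^ k = x ^ k * (g⁻¹*u*g) := (hc1.zpow_right k).eq
            rw [hHdef, mem_centralizer_iff]
            intro a ha
            rw [Set.mem_singleton_iff] at ha
            subst ha
            have e2 : u = g * (g⁻¹*u*g) * g⁻¹ := by group
            rw [hzdef, e2]
            calc (g*x^k*g⁻¹) * (g*(g⁻¹*u*g)*g⁻¹) = g * (x^k * (g⁻¹*u*g)) * g⁻¹ := by group
              _ = g * ((g⁻¹*u*g) * x^k) * g⁻¹ := by rw [hc2]
              _ = (g*(g⁻¹*u*g)*g⁻¹) * (g*x^k*g⁻¹) := by group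
          set nP := Nat.card (P : Subgroup G) with hnP
          have hQc : ∀ Q' : Sylow p G, Nat.card (Q' : Subgroup G) = nP :=
            fun Q' => mySylowCard Q' P
          have hHle : ∀ S : Sylow p ↥H, Nat.card (S : Subgroup ↥H) ≤ nP := by
            intro S
            have hM : IsPGroup p (Subgroup.map H.subtype (S : Subgroup ↥H)) :=
              S.2.map _
            obtain ⟨Qs, hQs⟩ := hM.exists_le_sylow
            have e : Nat.card (S : Subgroup ↥H)
                = Nat.card (Subgroup.map H.subtype (S : Subgroup ↥H)) :=
              Nat.card_congr (equivMapOfInjective _ _ H.subtype_injective).toEquiv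
            rw [e]
            calc _ ≤ Nat.card (Qs : Subgroup G) := Subgroup.card_le_of_le hQs
              _ = nP := hQc Qs
          have hPg_p : IsPGroup p Pg := by
            rw [hPgdef]
            exact P.2.of_equiv (equivSMul (MulAut.conj g) (P : Subgroup G))
          have hPgcard : Nat.card Pg = nP := by
            rw [hPgdef]
            exact (Nat.card_congr (equivSMul (MulAut.conj g) (P : Subgroup G)).toEquiv).symm
          have hHeq : ∀ S : Sylow p ↥H, Nat.card (S : Subgroup ↥H) = nP := by
            intro S
            have hA0p : IsPGroup p (Pg.subgroupOf H) := hPg_p.comap_subtype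
            obtain ⟨S0, hS0⟩ := hA0p.exists_le_sylow
            have e0 : Nat.card (Pg.subgroupOf H) = nP := by
              rw [Nat.card_congr (subgroupOfEquivOfLe hPgH).toEquiv]
              exact hPgcard
            have h1 : nP ≤ Nat.card (S0 : Subgroup ↥H) := e0 ▸ Subgroup.card_le_of_le hS0
            have h2 := hHle S0
            have h3 := hHle S
            have e1 := mySylowCard S S0
            omega
          by_cases hc1 : (Q : Subgroup G) ≤ H
          · -- Case 1 : Q centralizes z
            set A1 := Pg.subgroupOf H with hA1def
            set A2 := (Q : Subgroup G).subgroupOf H with hA2def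
            have hA1p : IsPGroup p A1 := hPg_p.comap_subtype
            have hA2p : IsPGroup p A2 := Q.2.comap_subtype
            obtain ⟨S1, hS1⟩ := hA1p.exists_le_sylow
            obtain ⟨S2, hS2⟩ := hA2p.exists_le_sylow
            have hA1card : Nat.card A1 = nP := by
              rw [hA1def, Nat.card_congr (subgroupOfEquivOfLe hPgH).toEquiv]
              exact hPgcard
            have hA2card : Nat.card A2 = nP := by
              rw [hA2def, Nat.card_congr (subgroupOfEquivOfLe hc1).toEquiv]
              exact hQc Q
            have hA1eq : A1 = (S1 : Subgroup ↥H) := myEqOfLe hS1 (by rw [hHeq S1, hA1card])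
            have hA2eq : A2 = (S2 : Subgroup ↥H) := myEqOfLe hS2 (by rw [hHeq S2, hA2card])
            obtain ⟨c, hc⟩ := MulAction.exists_smul_eq ↥H S1 S2
            have hgx_mem : g * x * g⁻¹ ∈ Pg := by
              rw [hPgdef]
              have h1 := smul_mem_pointwise_smul x (MulAut.conj g) (P : Subgroup G) hx
              rwa [show (MulAut.conj g) • x = g * x * g⁻¹ from rfl] at h1
            have hgxH : g * x * g⁻¹ ∈ H := hPgH hgx_mem
            have he1 : (⟨g*x*g⁻¹, hgxH⟩ : ↥H) ∈ (S1 : Subgroup ↥H) :=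
              hA1eq ▸ (mem_subgroupOf.mpr hgx_mem)
            have he2 : c * (⟨g*x*g⁻¹, hgxH⟩ : ↥H) * c⁻¹ ∈ S2 := by
              rw [← hc, mySmulMem']
              have e : c⁻¹ * (c * (⟨g*x*g⁻¹, hgxH⟩ : ↥H) * c⁻¹) * c
                  = (⟨g*x*g⁻¹, hgxH⟩ : ↥H) := by group
              rw [e]
              exact he1
            have he3 : (↑c * g) * x * (↑c * g)⁻¹ ∈ (Q : Subgroup G) := by
              have h5 : (c * (⟨g*x*g⁻¹, hgxH⟩ : ↥H) * c⁻¹) ∈ A2 := by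
                rw [hA2eq]
                exact he2
              have h4 := mem_subgroupOf.mp h5
              have h6 : ((c * (⟨g*x*g⁻¹, hgxH⟩ : ↥H) * c⁻¹ : ↥H) : G)
                  = (↑c * g) * x * (↑c * g)⁻¹ := by
                push_cast
                group
              rwa [h6] at h4
            have he4 := hU Q (↑c * g) w he3 hw
            have hzc : (c : G) * z * (c : G)⁻¹ = z := by
              have h7 := (mem_centralizer_iff.mp c.2) z (Set.mem_singleton z)
              calc (c:G) * z * (c:G)⁻¹ = (z * (c:G)) * (c:G)⁻¹ := by rw [← h7]
                _ = z := by group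
            calc z = (c:G) * z * (c:G)⁻¹ := hzc.symm
              _ = ((c:G) * g) * x ^ k * ((c:G) * g)⁻¹ := by rw [hzdef]; group
              _ = (((c:G) * g) * x * ((c:G) * g)⁻¹) ^ k := myConjPow _ _ _
              _ = (w * x * w⁻¹) ^ k := by rw [he4]
              _ = w * x ^ k * w⁻¹ := (myConjPow _ _ _).symm
          · -- Case 2 : Q does not centralize z
            set R : Subgroup G := (Q : Subgroup G) ⊓ H with hRdef
            have hRQ : R ≤ (Q : Subgroup G) := inf_le_left
            have hRH : R ≤ H := inf_le_right
            have hRlt : R < (Q : Subgroup G) := by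
              refine lt_of_le_of_ne hRQ ?_
              intro he
              exact hc1 (by rw [← he]; exact inf_le_right)
            by_cases hc2 : (normalizer (R : Set G)) = ⊤
            · -- R is normal in G : directly conclude
              have hn : R.Normal := normalizer_eq_top_iff.mp hc2
              have h1 : g * x * g⁻¹ ∈ (Q : Subgroup G) := by
                have h2 : (g * w⁻¹) * xQ * (g * w⁻¹)⁻¹ ∈ R := myConjMem hn hxQR _
                have h3 : (g * w⁻¹) * xQ * (g * w⁻¹)⁻¹ = g * x * g⁻¹ := by
                  rw [hxQdef]; group
                rw [h3] at h2
                exact hRQ h2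
              have h4 := hU Q g w h1 hw
              calc z = (g * x * g⁻¹) ^ k := by rw [hzdef, ← myConjPow]
                _ = (w * x * w⁻¹) ^ k := by rw [h4]
                _ = w * x ^ k * w⁻¹ := (myConjPow _ _ _).symm
            · -- the normalizer N of R is a proper subgroup
              set N : Subgroup G := (normalizer (R : Set G)) with hNdef
              have hNlt : N < ⊤ := lt_of_le_of_ne le_top hc2
              have hRN : R ≤ N := le_normalizer
              have hRp : IsPGroup p R := Q.2.to_le hRQ
              have hRHp : IsPGroup p (R.subgroupOf H) := hRp.comap_subtype
              obtain ⟨Sz, hSz⟩ := hRHp.exists_le_sylow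
              set Sm : Subgroup G := Subgroup.map H.subtype (Sz : Subgroup ↥H) with hSmdef
              have hSm_p : IsPGroup p Sm := Sz.2.map _
              have hSm_card : Nat.card Sm = nP := by
                rw [hSmdef, ← Nat.card_congr
                  (equivMapOfInjective (Sz : Subgroup ↥H) _ H.subtype_injective).toEquiv]
                exact hHeq Sz
              have hSmH : Sm ≤ H := map_subtype_le _
              have hRSm : R ≤ Sm := by
                intro a ha
                exact ⟨⟨a, hRH ha⟩, hSz (mem_subgroupOf.mpr ha), rfl⟩
              have hcardR : Nat.card R < nP := by
                have h1 := myCardLt hRlt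
                rwa [hQc Q] at h1
              have hRSm_lt : R < Sm := by
                refine lt_of_le_of_ne hRSm ?_
                intro he
                rw [he, hSm_card] at hcardR
                exact lt_irrefl _ hcardR
              have hB := myNormGrow hSm_p hRSm_lt
              have hA := myNormGrow Q.2 hRlt
              set B : Subgroup G := Sm ⊓ N with hBdef
              set A : Subgroup G := (Q : Subgroup G) ⊓ N with hAdef
              have hBN : B ≤ N := inf_le_right
              have hAN : A ≤ N := inf_le_right
              have hBp : IsPGroup p B := hSm_p.to_inf_left
              have hAp : IsPGroup p A := Q.2.to_inf_left
              have hBnp : IsPGroup p (B.subgroupOf N) := hBp.comap_subtype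
              have hAnp : IsPGroup p (A.subgroupOf N) := hAp.comap_subtype
              obtain ⟨T', hT'⟩ := hBnp.exists_le_sylow
              obtain ⟨T₃, hT₃⟩ := hAnp.exists_le_sylow
              obtain ⟨ν, hν⟩ := MulAction.exists_smul_eq ↥N T' T₃
              set T'g : Subgroup G := Subgroup.map N.subtype (T' : Subgroup ↥N) with hT'gdef
              have hT'g_p : IsPGroup p T'g := T'.2.map _
              obtain ⟨Q'', hQ''⟩ := hT'g_p.exists_le_sylow
              have hzN : z ∈ N := hRN hzR
              have hBle : B ≤ T'g := by
                intro b hb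
                exact ⟨⟨b, hBN hb⟩, hT' (mem_subgroupOf.mpr hb), rfl⟩
              have hzB : z ∈ B := ⟨hRSm hzR, hzN⟩
              have hzT'g : z ∈ T'g := hBle hzB
              have hzQ'' : z ∈ (Q'' : Subgroup G) := hQ'' hzT'g
              obtain ⟨w'', hw''⟩ := hEx Q''
              have hBC : B ≤ centralizer {z} := le_trans inf_le_left hSmH
              have hBQ'' : B ≤ (Q'' : Subgroup G) := le_trans hBle hQ''
              have hmeas1 : Nat.card G -
                  Nat.card ((Q'' : Subgroup G) ⊓ centralizer {z} : Subgroup G) < m := by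
                have h1 : Nat.card B ≤
                    Nat.card ((Q'' : Subgroup G) ⊓ centralizer {z} : Subgroup G) :=
                  Subgroup.card_le_of_le (le_inf hBQ'' hBC)
                have h2 := myCardLe ((Q'' : Subgroup G) ⊓ centralizer {z} : Subgroup G)
                omega
              have key1 := IH Q'' w'' g hw'' hzQ'' hmeas1
              have hQ''C : (Q'' : Subgroup G) ≤ centralizer {z} := by
                intro u hu
                rw [mem_centralizer_iff]
                intro a ha
                rw [Set.mem_singleton_iff] at ha
                subst ha
                have hcz : Commute u (w'' * x * w''⁻¹) := hZ Q'' w'' hw'' u hu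
                have hcz2 : Commute u ((w'' * x * w''⁻¹) ^ k) := hcz.zpow_right k
                have e : (w'' * x * w''⁻¹) ^ k = z := by
                  rw [← myConjPow]
                  exact key1.symm
                rw [e] at hcz2
                exact hcz2.symm.eq
              set z' : G := (ν : G) * z * (ν : G)⁻¹ with hz'def
              have hAC' : A ≤ centralizer {z'} := by
                intro a ha
                have h1 : (⟨a, hAN ha⟩ : ↥N) ∈ T₃ := hT₃ (mem_subgroupOf.mpr ha)
                have h2 : ν⁻¹ * (⟨a, hAN ha⟩ : ↥N) * ν ∈ T' := by
                  rw [← hν] at h1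
                  exact (mySmulMem' T' ν _).mp h1
                have h3 : (ν : G)⁻¹ * a * (ν : G) ∈ T'g := ⟨_, h2, rfl⟩
                have h4 : (ν : G)⁻¹ * a * (ν : G) ∈ centralizer {z} := hQ''C (hQ'' h3)
                have h5 := (mem_centralizer_iff.mp h4) z (Set.mem_singleton z)
                rw [mem_centralizer_iff]
                intro b hb
                rw [Set.mem_singleton_iff] at hb
                subst hb
                rw [hz'def]
                calc ((ν:G) * z * (ν:G)⁻¹) * a
                    = (ν:G) * (z * ((ν:G)⁻¹ * a * (ν:G))) * (ν:G)⁻¹ := by group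
                  _ = (ν:G) * (((ν:G)⁻¹ * a * (ν:G)) * z) * (ν:G)⁻¹ := by rw [h5]
                  _ = a * ((ν:G) * z * (ν:G)⁻¹) := by group
              have hν2 : (ν : G) ∈ (normalizer (R : Set G)) := ν.2
              have hz'R : z' ∈ R := (mem_normalizer_iff.mp hν2 z).mp hzR
              have hz'Q : z' ∈ (Q : Subgroup G) := hRQ hz'R
              have hz'form : z' = ((ν:G) * g) * x ^ k * ((ν:G) * g)⁻¹ := by
                rw [hz'def, hzdef]; group
              have hmeas2 : Nat.card G - Nat.card ((Q : Subgroup G) ⊓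
                  centralizer {((ν:G) * g) * x ^ k * ((ν:G) * g)⁻¹} : Subgroup G) < m := by
                have h1 : Nat.card A ≤
                    Nat.card ((Q : Subgroup G) ⊓ centralizer {z'} : Subgroup G) :=
                  Subgroup.card_le_of_le (le_inf inf_le_left hAC')
                have h2 := myCardLe ((Q : Subgroup G) ⊓ centralizer {z'} : Subgroup G)
                rw [← hz'form]
                omega
              have key2 := IH Q w ((ν:G) * g) hw (by rw [← hz'form]; exact hz'Q) hmeas2
              have hz't : z' = w * x ^ k * w⁻¹ := by rw [hz'form]; exact key2
              have hxQN : xQ ∈ N := by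
                rw [hNdef, mem_normalizer_iff]
                intro b
                constructor
                · intro hb
                  have hcb : Commute b xQ := hZ Q w hw b (hRQ hb)
                  have e : xQ * b * xQ⁻¹ = b := by
                    calc xQ * b * xQ⁻¹ = (xQ * b) * xQ⁻¹ := by group
                      _ = (b * xQ) * xQ⁻¹ := by rw [← hcb.eq]
                      _ = b := by group
                  rw [e]; exact hb
                · intro hb
                  have hbQ' : xQ * b * xQ⁻¹ ∈ (Q : Subgroup G) := hRQ hb
                  have hcb : Commute (xQ * b * xQ⁻¹) xQ := hZ Q w hw _ hbQ'
                  have e : b = xQ⁻¹ * (xQ * b * xQ⁻¹) * xQ := by group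
                  have e2 : xQ⁻¹ * (xQ * b * xQ⁻¹) * xQ = xQ * b * xQ⁻¹ := by
                    calc xQ⁻¹ * (xQ * b * xQ⁻¹) * xQ
                        = xQ⁻¹ * ((xQ * b * xQ⁻¹) * xQ) := by group
                      _ = xQ⁻¹ * (xQ * (xQ * b * xQ⁻¹)) := by rw [hcb.eq]
                      _ = xQ * b * xQ⁻¹ := by group
                  rw [e, e2]
                  exact hb
              have hxQA : xQ ∈ A := ⟨hw, hxQN⟩
              have hzA : z ∈ A := ⟨hzQ, hzN⟩
              set xQn : ↥N := ⟨xQ, hxQN⟩ with hxQndef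
              have hxQnT₃ : xQn ∈ (T₃ : Subgroup ↥N) := hT₃ (mem_subgroupOf.mpr hxQA)
              have hisoN : ∀ v : ↥N, v * xQn * v⁻¹ ∈ (T₃ : Subgroup ↥N) →
                  v * xQn * v⁻¹ = xQn := by
                intro v hv
                set T₃g : Subgroup G := Subgroup.map N.subtype (T₃ : Subgroup ↥N) with hT₃gdef
                have hT₃gp : IsPGroup p T₃g := T₃.2.map _
                obtain ⟨Q₃, hQ₃⟩ := hT₃gp.exists_le_sylow
                have hmem1 : ((v * xQn * v⁻¹ : ↥N) : G) ∈ T₃g := ⟨_, hv, rfl⟩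
                have hmem1' : ((v:G) * w) * x * ((v:G) * w)⁻¹ ∈ (Q₃ : Subgroup G) := by
                  have e : ((v * xQn * v⁻¹ : ↥N) : G) = ((v:G) * w) * x * ((v:G) * w)⁻¹ := by
                    push_cast
                    show (v:G) * xQ * (v:G)⁻¹ = _
                    rw [hxQdef]
                    group
                  rw [← e]
                  exact hQ₃ hmem1
                have hmem2 : w * x * w⁻¹ ∈ (Q₃ : Subgroup G) := by
                  have h9 : (xQn : G) ∈ T₃g := ⟨_, hxQnT₃, rfl⟩
                  exact hQ₃ h9
                have h6 := hU Q₃ ((v:G) * w) w hmem1' hmem2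
                apply Subtype.ext
                push_cast
                calc ((v:G)) * xQ * ((v:G))⁻¹ = ((v:G) * w) * x * ((v:G) * w)⁻¹ := by
                      rw [hxQdef]; group
                  _ = w * x * w⁻¹ := h6
                  _ = xQ := rfl
              have hcardN : Nat.card ↥N ≤ n := by
                have h1 := myCardLt hNlt
                rw [Subgroup.card_top] at h1
                omega
              have hzNelt : (⟨z, hzN⟩ : ↥N) ∈ (T₃ : Subgroup ↥N) := hT₃ (mem_subgroupOf.mpr hzA)
              have hkey : ν⁻¹ * xQn ^ k * (ν⁻¹)⁻¹ = (⟨z, hzN⟩ : ↥N) := by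
                apply Subtype.ext
                push_cast
                have e1 : xQ ^ k = w * x ^ k * w⁻¹ := by rw [hxQdef, ← myConjPow]
                rw [e1, ← hz't, hz'def]
                group
              have hg2 : ν⁻¹ * xQn ^ k * (ν⁻¹)⁻¹ ∈ (T₃ : Subgroup ↥N) := by
                rw [hkey]; exact hzNelt
              have hw2 : (1 : ↥N) * xQn * (1 : ↥N)⁻¹ ∈ (T₃ : Subgroup ↥N) := by
                simpa using hxQnT₃
              have hfinal := IHouter ↥N hcardN p T₃ xQn hxQnT₃ hisoN k T₃ 1 ν⁻¹ hw2 hg2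
              have h10 : (⟨z, hzN⟩ : ↥N) = xQn ^ k := by
                rw [← hkey, hfinal]
                group
              have hconc : z = xQ ^ k := by
                have h8 := congrArg (Subtype.val) h10
                push_cast at h8
                exact h8
              rw [hconc, hxQdef, ← myConjPow]
      obtain ⟨w0⟩ : Nonempty G := inferInstance
      intro Q w g hw hg
      exact INNER (Nat.card G + 1) Q w g hw hg (by omega)

end main

theorem stmt_4 {G : Type*} [Group G] [Finite G] (p : ℕ) [Fact p.Prime]
    (P : Sylow p G) (x : G) (hx : x ∈ (P : Subgroup G))
    (h : {z : G | IsConj x z} ∩ (P : Subgroup G) = {x}) :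
    ∀ y ∈ Subgroup.zpowers x, {z : G | IsConj y z} ∩ (P : Subgroup G) = {y} := by
  have hiso : ∀ g : G, g * x * g⁻¹ ∈ (P : Subgroup G) → g * x * g⁻¹ = x := by
    intro g hg
    have : g * x * g⁻¹ ∈ {z : G | IsConj x z} ∩ (P : Subgroup G) :=
      ⟨isConj_iff.mpr ⟨g, rfl⟩, hg⟩
    rwa [h] at this
  intro y hy
  obtain ⟨k, rfl⟩ := Subgroup.mem_zpowers_iff.mp hy
  ext z
  simp only [Set.mem_inter_iff, Set.mem_setOf_eq, SetLike.mem_coe, Set.mem_singleton_iff]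
  constructor
  · rintro ⟨hconj, hzP⟩
    obtain ⟨c, hc⟩ := isConj_iff.mp hconj
    have := myAUX (Nat.card G) G le_rfl p P x hx hiso k P 1 c
      (by simpa using hx) (by rw [hc]; exact hzP)
    rw [hc] at this
    simpa using this
  · rintro rfl
    exact ⟨IsConj.refl _, zpow_mem hx k⟩
end

section
/- Let G be a finite group and π a nonempty set of primes, and let μ ⊆ π be a nonempty subset. Then d_π(G) ≤ d_μ(G) ≤ 1, where d_σ(G) = k_σ(G)/|G|_σ, k_σ(G) is the number of conjugacy classes of σ-elements of G, and |G|_σ is the σ-part of |G|. -/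
open scoped Classical

/-- The number of conjugacy classes of `π`-elements of `G`. -/
noncomputable def kpi (π : Set ℕ) (G : Type*) [Group G] : ℕ :=
  Nat.card {c : ConjClasses G // ∀ g ∈ c.carrier, ∀ q : ℕ, q.Prime → q ∣ orderOf g → q ∈ π}

/-- The `π`-part of a natural number. -/
noncomputable def piPart (π : Set ℕ) (n : ℕ) : ℕ :=
  n.factorization.prod fun q k => if q ∈ π then q ^ k else 1

namespace PiAux

lemma piPart_pos (σ : Set ℕ) (n : ℕ) : 0 < piPart σ n := by
  rw [piPart, Finsupp.prod]
  refine Finset.prod_pos fun q hq => ?_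
  have hqp : q.Prime := Nat.prime_of_mem_primeFactors (by rwa [← Nat.support_factorization])
  by_cases h : q ∈ σ <;> simp [h, pow_pos hqp.pos]

lemma piPart_dvd (σ : Set ℕ) (n : ℕ) : piPart σ n ∣ n := by
  rcases eq_or_ne n 0 with rfl | hn
  · exact dvd_zero _
  · conv_rhs => rw [← Nat.factorization_prod_pow_eq_self hn]
    rw [piPart, Finsupp.prod, Finsupp.prod]
    refine Finset.prod_dvd_prod_of_dvd _ _ fun q hq => ?_
    by_cases h : q ∈ σ <;> simp [h]

lemma pow_factorization_dvd_piPart {σ : Set ℕ} {q n : ℕ} (hq : q ∈ σ) :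
    q ^ n.factorization q ∣ piPart σ n := by
  by_cases hsupp : q ∈ n.factorization.support
  · have := Finset.dvd_prod_of_mem (fun p => if p ∈ σ then p ^ n.factorization p else 1) hsupp
    simpa [piPart, Finsupp.prod, hq] using this
  · rw [Finsupp.notMem_support_iff.mp hsupp, pow_zero]
    exact one_dvd _

lemma prime_dvd_piPart {σ : Set ℕ} {q n : ℕ} (hq : q.Prime) (h : q ∣ piPart σ n) :
    q ∈ σ ∧ q ∣ n := by
  rw [piPart, Finsupp.prod] at h
  obtain ⟨p, hp, hdvd⟩ := (hq.prime.dvd_finset_prod_iff _).mp h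
  by_cases hpσ : p ∈ σ
  · rw [if_pos hpσ] at hdvd
    have hpp : p.Prime := Nat.prime_of_mem_primeFactors (by rwa [← Nat.support_factorization])
    have hqp : q = p := (Nat.prime_dvd_prime_iff_eq hq hpp).mp (hq.dvd_of_dvd_pow hdvd)
    subst hqp
    exact ⟨hpσ, Nat.dvd_of_mem_primeFactors (by rwa [Nat.support_factorization] at hp)⟩
  · rw [if_neg hpσ] at hdvd
    exact absurd (Nat.dvd_one.mp hdvd) hq.ne_one

lemma dvd_piPart {σ : Set ℕ} {d n : ℕ} (hn : n ≠ 0) (hdn : d ∣ n)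
    (hd : ∀ q : ℕ, q.Prime → q ∣ d → q ∈ σ) : d ∣ piPart σ n := by
  have hd0 : d ≠ 0 := by rintro rfl; exact hn (zero_dvd_iff.mp hdn)
  have hpp0 : piPart σ n ≠ 0 := (piPart_pos σ n).ne'
  rw [← Nat.factorization_le_iff_dvd hd0 hpp0]
  intro q
  by_cases hq : q ∈ d.factorization.support
  · have hqp : q.Prime := Nat.prime_of_mem_primeFactors (by rwa [← Nat.support_factorization])
    have hqd : q ∣ d := Nat.dvd_of_mem_primeFactors (by rwa [Nat.support_factorization] at hq)
    have hqσ : q ∈ σ := hd q hqp hqd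
    have h1 : d.factorization q ≤ n.factorization q :=
      (Nat.factorization_le_iff_dvd hd0 hn).mpr hdn q
    have h2 : n.factorization q ≤ (piPart σ n).factorization q :=
      (hqp.pow_dvd_iff_le_factorization hpp0).mp (pow_factorization_dvd_piPart hqσ)
    exact h1.trans h2
  · simp [Finsupp.notMem_support_iff.mp hq]

lemma piPart_mono {σ : Set ℕ} {m n : ℕ} (hmn : m ∣ n) (hn : n ≠ 0) :
    piPart σ m ∣ piPart σ n :=
  dvd_piPart hn ((piPart_dvd σ m).trans hmn) fun q hq hqd => (prime_dvd_piPart hq hqd).1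

lemma coprime_piPart_div {σ : Set ℕ} {n : ℕ} (hn : n ≠ 0) :
    (piPart σ n).Coprime (n / piPart σ n) := by
  by_contra h
  obtain ⟨q, hq, hqd⟩ := Nat.exists_prime_and_dvd h
  have hq1 : q ∣ piPart σ n := hqd.trans (Nat.gcd_dvd_left _ _)
  have hq2 : q ∣ n / piPart σ n := hqd.trans (Nat.gcd_dvd_right _ _)
  obtain ⟨hqσ, hqn⟩ := prime_dvd_piPart hq hq1
  have h3 : piPart σ n * q ∣ n := (Nat.dvd_div_iff_mul_dvd (piPart_dvd σ n)).mp hq2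
  have h4 : q ^ (n.factorization q + 1) ∣ n := by
    rw [pow_succ]
    exact (mul_dvd_mul_right (pow_factorization_dvd_piPart hqσ) q).trans h3
  exact Nat.pow_succ_factorization_not_dvd hn hq h4

lemma piPart_mul_diff {μ π : Set ℕ} (h : μ ⊆ π) (n : ℕ) :
    piPart μ n * piPart (π \ μ) n = piPart π n := by
  rw [piPart, piPart, piPart, Finsupp.prod, Finsupp.prod, Finsupp.prod,
    ← Finset.prod_mul_distrib]
  refine Finset.prod_congr rfl fun q _ => ?_
  by_cases h1 : q ∈ μ
  · have : q ∉ π \ μ := fun hc => hc.2 h1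
    simp [h1, h h1, this]
  · by_cases h2 : q ∈ π <;> simp [h1, h2, Set.mem_diff]

lemma piPart_singleton (p n : ℕ) : piPart {p} n = p ^ n.factorization p := by
  rw [piPart, Finsupp.prod]
  by_cases hp : p ∈ n.factorization.support
  · rw [Finset.prod_eq_single p (fun q _ hne => by simp [Set.mem_singleton_iff, hne])
      (fun h => absurd hp h)]
    simp
  · rw [Finset.prod_eq_one fun q hq => ?_, Finsupp.notMem_support_iff.mp hp, pow_zero]
    have : q ≠ p := fun h => hp (h ▸ hq)
    simp [this]

end PiAux

section Grp
open PiAux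

variable {G : Type*} [Group G] [Finite G]

/-- σ-element predicate -/
def IsSig (σ : Set ℕ) (g : G) : Prop := ∀ q : ℕ, q.Prime → q ∣ orderOf g → q ∈ σ

lemma orderOf_conj' (x h : G) : orderOf (x * h * x⁻¹) = orderOf h := by
  have := orderOf_injective ((MulAut.conj x) : G ≃* G).toMonoidHom
    (MulAut.conj x).injective h
  simpa [MulAut.conj_apply] using this

lemma IsConj.orderOf_eq'' {a b : G} (h : IsConj a b) : orderOf a = orderOf b := by
  obtain ⟨x, hx⟩ := isConj_iff.mp h
  rw [← hx, orderOf_conj']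

lemma isSig_congr {σ : Set ℕ} {a b : G} (h : IsConj a b) : IsSig σ a ↔ IsSig σ b := by
  unfold IsSig
  rw [h.orderOf_eq'']

noncomputable def rep (c : ConjClasses G) : G := Quotient.out c

lemma mk_rep (c : ConjClasses G) : ConjClasses.mk (rep c) = c := by
  rw [← ConjClasses.quotient_mk_eq_mk]
  exact Quotient.out_eq c

lemma rep_mem_carrier (c : ConjClasses G) : rep c ∈ c.carrier :=
  ConjClasses.mem_carrier_iff_mk_eq.mpr (mk_rep c)

lemma carrier_isSig_iff (σ : Set ℕ) (c : ConjClasses G) :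
    (∀ g ∈ c.carrier, IsSig σ g) ↔ IsSig σ (rep c) := by
  constructor
  · exact fun h => h _ (rep_mem_carrier c)
  · intro h g hg
    have hmk : ConjClasses.mk g = ConjClasses.mk (rep c) := by
      rw [ConjClasses.mem_carrier_iff_mk_eq.mp hg, mk_rep]
    exact (isSig_congr (ConjClasses.mk_eq_mk_iff_isConj.mp hmk)).mpr h

variable (μ : Set ℕ)

/-- Existence and uniqueness of the μ-decomposition. -/
lemma decomp_spec (g : G) :
    ∃ yz : G × G, (yz.1 * yz.2 = g ∧ Commute yz.1 yz.2 ∧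
        orderOf yz.1 = piPart μ (orderOf g) ∧
        orderOf yz.2 = orderOf g / piPart μ (orderOf g)) ∧
      ∀ yz' : G × G, (yz'.1 * yz'.2 = g ∧ Commute yz'.1 yz'.2 ∧
        orderOf yz'.1 = piPart μ (orderOf g) ∧
        orderOf yz'.2 = orderOf g / piPart μ (orderOf g)) → yz' = yz := by
  set n := orderOf g with hn
  set m := piPart μ n with hm
  set k := n / m with hk
  have hmdvd : m ∣ n := piPart_dvd μ n
  have hmk : m * k = n := Nat.mul_div_cancel' hmdvd
  have hn0 : n ≠ 0 := (orderOf_pos g).ne'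
  have hm0 : 0 < m := piPart_pos μ n
  have hk0 : 0 < k := Nat.pos_of_ne_zero fun h => hn0 (by rw [← hmk, h, mul_zero])
  have hco : m.Coprime k := coprime_piPart_div hn0
  obtain ⟨a, b, hab⟩ := hco.isCoprime
  set y := g ^ (b * (k : ℤ)) with hy
  set z := g ^ (a * (m : ℤ)) with hz
  have hcomm : Commute y z := Commute.zpow_zpow_self g _ _
  have hprod : y * z = g := by
    rw [hy, hz, ← zpow_add, show b * (k : ℤ) + a * m = 1 by linarith [hab], zpow_one]
  have hyn : y ^ m = 1 := by
    rw [hy, ← zpow_natCast, ← zpow_mul,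
      show b * (k : ℤ) * m = (n : ℤ) * b by push_cast [← hmk]; ring,
      zpow_mul, zpow_natCast, pow_orderOf_eq_one, one_zpow]
  have hzk : z ^ k = 1 := by
    rw [hz, ← zpow_natCast, ← zpow_mul,
      show a * (m : ℤ) * k = (n : ℤ) * a by push_cast [← hmk]; ring,
      zpow_mul, zpow_natCast, pow_orderOf_eq_one, one_zpow]
  have hoy : orderOf y ∣ m := orderOf_dvd_of_pow_eq_one hyn
  have hoz : orderOf z ∣ k := orderOf_dvd_of_pow_eq_one hzk
  have hdvd1 : n ∣ orderOf y * orderOf z := by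
    have h := hcomm.orderOf_mul_dvd_mul_orderOf
    rwa [hprod] at h
  have heq : orderOf y * orderOf z = m * k :=
    Nat.dvd_antisymm (mul_dvd_mul hoy hoz) (hmk ▸ hdvd1)
  have hyle : orderOf y ≤ m := Nat.le_of_dvd hm0 hoy
  have hzle : orderOf z ≤ k := Nat.le_of_dvd hk0 hoz
  have hoym : orderOf y = m := by
    refine le_antisymm hyle (Nat.le_of_mul_le_mul_right ?_ hk0)
    rw [← heq]
    exact Nat.mul_le_mul_left _ hzle
  have hozk : orderOf z = k := by
    have h := heq
    rw [hoym] at h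
    exact Nat.eq_of_mul_eq_mul_left hm0 h
  refine ⟨(y, z), ⟨hprod, hcomm, hoym, hozk⟩, ?_⟩
  rintro ⟨y', z'⟩ ⟨hp', hc', ho1', ho2'⟩
  simp only at hp' hc' ho1' ho2' ⊢
  have hy'm : y' ^ m = 1 := by rw [← ho1']; exact pow_orderOf_eq_one y'
  have hz'k : z' ^ k = 1 := by rw [← ho2']; exact pow_orderOf_eq_one z'
  have hgbk : g ^ (b * (k : ℤ)) = y' := by
    rw [← hp', hc'.mul_zpow]
    have hz'0 : z' ^ (b * (k : ℤ)) = 1 := by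
      rw [mul_comm, zpow_mul, zpow_natCast, hz'k, one_zpow]
    have hy'am : y' ^ (a * (m : ℤ)) = 1 := by
      rw [mul_comm, zpow_mul, zpow_natCast, hy'm, one_zpow]
    have hy'0 : y' ^ (b * (k : ℤ)) = y' := by
      rw [show b * (k : ℤ) = 1 - a * m by linarith [hab], zpow_sub, zpow_one, hy'am,
        inv_one, mul_one]
    rw [hy'0, hz'0, mul_one]
  have hyy : y' = y := by rw [← hgbk, hy]
  have hzz : z' = z := by
    have h := hp'.trans hprod.symm
    rw [hyy] at h
    exact mul_left_cancel h
  rw [hyy, hzz]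

noncomputable def muPart (g : G) : G := (Classical.choose (decomp_spec μ g)).1

noncomputable def nuPart (g : G) : G := (Classical.choose (decomp_spec μ g)).2

lemma muPart_mul_nuPart (g : G) : muPart μ g * nuPart μ g = g :=
  (Classical.choose_spec (decomp_spec μ g)).1.1

lemma commute_muPart_nuPart (g : G) : Commute (muPart μ g) (nuPart μ g) :=
  (Classical.choose_spec (decomp_spec μ g)).1.2.1

lemma orderOf_muPart (g : G) : orderOf (muPart μ g) = piPart μ (orderOf g) :=
  (Classical.choose_spec (decomp_spec μ g)).1.2.2.1

lemma orderOf_nuPart (g : G) : orderOf (nuPart μ g) = orderOf g / piPart μ (orderOf g) :=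
  (Classical.choose_spec (decomp_spec μ g)).1.2.2.2

lemma decomp_unique {g y z : G} (h1 : y * z = g) (h2 : Commute y z)
    (h3 : orderOf y = piPart μ (orderOf g))
    (h4 : orderOf z = orderOf g / piPart μ (orderOf g)) :
    y = muPart μ g ∧ z = nuPart μ g := by
  have h := (Classical.choose_spec (decomp_spec μ g)).2 (y, z) ⟨h1, h2, h3, h4⟩
  exact ⟨congrArg Prod.fst h, congrArg Prod.snd h⟩

lemma muPart_conj (x g : G) :
    muPart μ (x * g * x⁻¹) = x * muPart μ g * x⁻¹ ∧
      nuPart μ (x * g * x⁻¹) = x * nuPart μ g * x⁻¹ := by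
  have horder : orderOf (x * g * x⁻¹) = orderOf g := orderOf_conj' x g
  have h := decomp_unique μ (g := x * g * x⁻¹)
    (y := x * muPart μ g * x⁻¹) (z := x * nuPart μ g * x⁻¹) ?_ ?_ ?_ ?_
  · exact ⟨h.1.symm, h.2.symm⟩
  · rw [show (x * muPart μ g * x⁻¹) * (x * nuPart μ g * x⁻¹)
        = x * (muPart μ g * nuPart μ g) * x⁻¹ by group, muPart_mul_nuPart]
  · have h := (commute_muPart_nuPart μ g).map (MulAut.conj x).toMonoidHom
    simpa [MulAut.conj_apply] using h
  · rw [orderOf_conj', orderOf_muPart, horder]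
  · rw [orderOf_conj', orderOf_nuPart, horder]

lemma isSig_muPart (g : G) : IsSig μ (muPart μ g) := by
  intro q hq hdvd
  rw [orderOf_muPart] at hdvd
  exact (prime_dvd_piPart hq hdvd).1

lemma isSig_nuPart {π : Set ℕ} (g : G) (hg : IsSig π g) :
    IsSig (π \ μ) (nuPart μ g) := by
  intro q hq hdvd
  rw [orderOf_nuPart] at hdvd
  have hn0 : orderOf g ≠ 0 := (orderOf_pos g).ne'
  have hdvdn : q ∣ orderOf g := hdvd.trans (Nat.div_dvd_of_dvd (piPart_dvd μ _))
  refine ⟨hg q hq hdvdn, fun hqμ => ?_⟩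
  have h1 : q ∣ piPart μ (orderOf g) :=
    (dvd_pow_self q (Nat.Prime.factorization_pos_of_dvd hq hn0 hdvdn).ne').trans
      (pow_factorization_dvd_piPart hqμ)
  have hco : Nat.gcd (piPart μ (orderOf g)) (orderOf g / piPart μ (orderOf g)) = 1 :=
    coprime_piPart_div hn0
  exact hq.ne_one (Nat.dvd_one.mp (hco ▸ Nat.dvd_gcd h1 hdvd))

end Grp

section Count
open PiAux

variable {G : Type*} [Group G] [Finite G]

abbrev SC (σ : Set ℕ) (G : Type*) [Group G] :=
  {c : ConjClasses G // ∀ g ∈ c.carrier, ∀ q : ℕ, q.Prime → q ∣ orderOf g → q ∈ σ}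

lemma kpi_eq (σ : Set ℕ) : kpi σ G = Nat.card (SC σ G) := rfl

lemma mem_SC_of_isSig {σ : Set ℕ} {h : G} (hh : IsSig σ h) :
    ∀ g ∈ (ConjClasses.mk h).carrier, ∀ q : ℕ, q.Prime → q ∣ orderOf g → q ∈ σ := fun g hg =>
  (isSig_congr (ConjClasses.mk_eq_mk_iff_isConj.mp
    (ConjClasses.mem_carrier_iff_mk_eq.mp hg))).mpr hh

noncomputable def psi (π μ : Set ℕ) (c : SC π G) : SC μ G :=
  ⟨ConjClasses.mk (muPart μ (rep c.1)), mem_SC_of_isSig (isSig_muPart μ (rep c.1))⟩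

lemma fiber_card_le (π μ : Set ℕ) (d : SC μ G) :
    Nat.card {c : SC π G // psi π μ c = d} ≤
      kpi (π \ μ) (Subgroup.centralizer {rep d.1}) := by
  set r := rep d.1 with hr
  have hsel : ∀ c : {c : SC π G // psi π μ c = d},
      ∃ x : G, x * muPart μ (rep c.1.1) * x⁻¹ = r := by
    intro c
    have h1 : ConjClasses.mk (muPart μ (rep c.1.1)) = d.1 := congrArg Subtype.val c.2
    exact isConj_iff.mp (ConjClasses.mk_eq_mk_iff_isConj.mp (h1.trans (mk_rep d.1).symm))
  choose x hx using hsel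
  have hcomm : ∀ c : {c : SC π G // psi π μ c = d},
      Commute (x c * muPart μ (rep c.1.1) * (x c)⁻¹)
        (x c * nuPart μ (rep c.1.1) * (x c)⁻¹) := by
    intro c
    have h := (commute_muPart_nuPart μ (rep c.1.1)).map (MulAut.conj (x c)).toMonoidHom
    simpa [MulAut.conj_apply] using h
  have hmem : ∀ c : {c : SC π G // psi π μ c = d},
      x c * nuPart μ (rep c.1.1) * (x c)⁻¹ ∈ Subgroup.centralizer {r} := by
    intro c
    rw [Subgroup.mem_centralizer_iff]
    rintro h hh
    rw [Set.mem_singleton_iff] at hh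
    subst hh
    rw [← hx c]
    exact hcomm c
  have hprop : ∀ c : {c : SC π G // psi π μ c = d},
      IsSig (π \ μ)
        (⟨x c * nuPart μ (rep c.1.1) * (x c)⁻¹, hmem c⟩ : Subgroup.centralizer {r}) := by
    intro c q hq hdvd
    rw [Subgroup.orderOf_mk, orderOf_conj'] at hdvd
    exact isSig_nuPart μ (rep c.1.1) ((carrier_isSig_iff π c.1.1).mp c.1.2) q hq hdvd
  refine Nat.card_le_card_of_injective
    (fun c => (⟨ConjClasses.mk ⟨x c * nuPart μ (rep c.1.1) * (x c)⁻¹, hmem c⟩,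
      mem_SC_of_isSig (hprop c)⟩ : SC (π \ μ) (Subgroup.centralizer {r}))) ?_
  intro c₁ c₂ hceq
  have h0 : ConjClasses.mk (⟨x c₁ * nuPart μ (rep c₁.1.1) * (x c₁)⁻¹, hmem c₁⟩ :
        Subgroup.centralizer ({r} : Set G))
      = ConjClasses.mk ⟨x c₂ * nuPart μ (rep c₂.1.1) * (x c₂)⁻¹, hmem c₂⟩ :=
    congrArg Subtype.val hceq
  obtain ⟨w, hw⟩ := isConj_iff.mp (ConjClasses.mk_eq_mk_iff_isConj.mp h0)
  have hwG : (w : G) * (x c₁ * nuPart μ (rep c₁.1.1) * (x c₁)⁻¹) * (w : G)⁻¹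
      = x c₂ * nuPart μ (rep c₂.1.1) * (x c₂)⁻¹ := by
    have h := congrArg Subtype.val hw
    push_cast at h
    exact h
  have hwr : (w : G) * r * (w : G)⁻¹ = r := by
    have h := Subgroup.mem_centralizer_iff.mp w.2 r (Set.mem_singleton r)
    rw [← h]
    group
  have hself : ∀ c : {c : SC π G // psi π μ c = d},
      muPart μ (rep c.1.1) * nuPart μ (rep c.1.1) = rep c.1.1 := fun c =>
    muPart_mul_nuPart μ _
  have e1 : (w : G) * (x c₁ * muPart μ (rep c₁.1.1) * (x c₁)⁻¹) * (w : G)⁻¹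
      = x c₂ * muPart μ (rep c₂.1.1) * (x c₂)⁻¹ := by
    rw [hx c₁, hx c₂]
    exact hwr
  have key : IsConj (rep c₁.1.1) (rep c₂.1.1) := by
    refine isConj_iff.mpr ⟨(x c₂)⁻¹ * (w : G) * x c₁, ?_⟩
    calc ((x c₂)⁻¹ * (w : G) * x c₁) * rep c₁.1.1 * ((x c₂)⁻¹ * (w : G) * x c₁)⁻¹
        = (x c₂)⁻¹ * (((w : G) * (x c₁ * muPart μ (rep c₁.1.1) * (x c₁)⁻¹) * (w : G)⁻¹)
            * ((w : G) * (x c₁ * nuPart μ (rep c₁.1.1) * (x c₁)⁻¹) * (w : G)⁻¹)) * x c₂ := by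
          conv_lhs => rw [← hself c₁]
          group
      _ = (x c₂)⁻¹ * ((x c₂ * muPart μ (rep c₂.1.1) * (x c₂)⁻¹)
            * (x c₂ * nuPart μ (rep c₂.1.1) * (x c₂)⁻¹)) * x c₂ := by rw [e1, hwG]
      _ = muPart μ (rep c₂.1.1) * nuPart μ (rep c₂.1.1) := by group
      _ = rep c₂.1.1 := hself c₂
  have hcc : c₁.1.1 = c₂.1.1 :=
    (mk_rep c₁.1.1).symm.trans ((ConjClasses.mk_eq_mk_iff_isConj.mpr key).trans (mk_rep c₂.1.1))
  exact Subtype.ext (Subtype.ext hcc)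

lemma kpi_le_sum (π μ : Set ℕ) (B : ℕ)
    (hB : ∀ H : Subgroup G, kpi (π \ μ) H ≤ B) :
    kpi π G ≤ kpi μ G * B := by
  haveI : Fintype (SC μ G) := Fintype.ofFinite _
  haveI : ∀ d : SC μ G, Fintype {c : SC π G // psi π μ c = d} := fun _ => Fintype.ofFinite _
  have h1 : kpi π G = ∑ d : SC μ G, Nat.card {c : SC π G // psi π μ c = d} := by
    calc kpi π G = Nat.card (Σ d : SC μ G, {c : SC π G // psi π μ c = d}) :=
          Nat.card_congr (Equiv.sigmaFiberEquiv (psi π μ)).symm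
      _ = ∑ d : SC μ G, Nat.card {c : SC π G // psi π μ c = d} := by
          rw [Nat.card_eq_fintype_card, Fintype.card_sigma]
          exact Finset.sum_congr rfl fun d _ => Nat.card_eq_fintype_card.symm
  rw [h1]
  calc ∑ d : SC μ G, Nat.card {c : SC π G // psi π μ c = d}
      ≤ ∑ _d : SC μ G, B :=
        Finset.sum_le_sum fun d _ => (fiber_card_le π μ d).trans (hB _)
    _ = kpi μ G * B := by
        rw [Finset.sum_const, Finset.card_univ, smul_eq_mul, ← Nat.card_eq_fintype_card]
        rfl

end Count

section Final
open PiAux Pointwise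

universe u

variable {G : Type*} [Group G] [Finite G]

lemma kpi_singleton_le (p : ℕ) (hp : p.Prime) :
    kpi ({p} : Set ℕ) G ≤ p ^ (Nat.card G).factorization p := by
  haveI := Fact.mk hp
  haveI : Finite (Subgroup G) :=
    Finite.of_injective (fun H : Subgroup G => (H : Set G)) SetLike.coe_injective
  haveI : Finite (Sylow p G) :=
    Finite.of_injective (fun P : Sylow p G => (P : Subgroup G)) fun P Q h => Sylow.ext h
  obtain ⟨P⟩ : Nonempty (Sylow p G) := inferInstance
  have hsel : ∀ c : SC ({p} : Set ℕ) G,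
      ∃ h : G, h ∈ (P : Subgroup G) ∧ ConjClasses.mk h = c.1 := by
    intro c
    have hsig : IsSig {p} (rep c.1) := (carrier_isSig_iff _ _).mp c.2
    have hord : orderOf (rep c.1) ∣ p ^ (orderOf (rep c.1)).factorization p := by
      rw [← piPart_singleton]
      exact dvd_piPart (orderOf_pos _).ne' dvd_rfl hsig
    obtain ⟨k, -, hk⟩ := (Nat.dvd_prime_pow hp).mp hord
    have hPg : IsPGroup p (Subgroup.zpowers (rep c.1)) :=
      IsPGroup.of_card (by rw [Nat.card_zpowers]; exact hk)
    obtain ⟨Q, hQ⟩ := hPg.exists_le_sylow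
    obtain ⟨g', hg'⟩ := MulAction.exists_smul_eq G Q P
    refine ⟨g' * rep c.1 * g'⁻¹, ?_, ?_⟩
    · have hmemQ : rep c.1 ∈ (Q : Subgroup G) := hQ (Subgroup.mem_zpowers _)
      have h2 : MulAut.conj g' • rep c.1 ∈ MulAut.conj g' • (Q : Subgroup G) :=
        Subgroup.smul_mem_pointwise_smul _ _ _ hmemQ
      rw [← Sylow.coe_subgroup_smul, hg'] at h2
      simpa [MulAut.smul_def, MulAut.conj_apply] using h2
    · have hcj : IsConj (rep c.1) (g' * rep c.1 * g'⁻¹) := isConj_iff.mpr ⟨g', rfl⟩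
      rw [← ConjClasses.mk_eq_mk_iff_isConj] at hcj
      exact hcj.symm.trans (mk_rep c.1)
  choose f hfP hfmk using hsel
  have hle : kpi ({p} : Set ℕ) G ≤ Nat.card (P : Subgroup G) := by
    refine Nat.card_le_card_of_injective
      (fun c => (⟨f c, hfP c⟩ : (P : Subgroup G))) ?_
    intro c₁ c₂ h
    have : f c₁ = f c₂ := congrArg Subtype.val h
    exact Subtype.ext ((hfmk c₁).symm.trans ((congrArg ConjClasses.mk this).trans (hfmk c₂)))
  calc kpi ({p} : Set ℕ) G ≤ Nat.card (P : Subgroup G) := hle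
    _ = p ^ (Nat.card G).factorization p := P.card_eq_multiplicity

noncomputable def pcount (σ : Set ℕ) (n : ℕ) : ℕ :=
  (n.primeFactors.filter (fun q => q ∈ σ)).card

lemma pcount_lt {σ : Set ℕ} {p n m : ℕ} (hpσ : p ∈ σ) (hpn : p ∈ n.primeFactors)
    (hm : m ∣ n) (hn : n ≠ 0) : pcount (σ \ {p}) m < pcount σ n := by
  unfold pcount
  refine lt_of_le_of_lt (Finset.card_le_card fun q hq => ?_)
    (Finset.card_erase_lt_of_mem (by simp only [Finset.mem_filter]; exact ⟨hpn, hpσ⟩))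
  simp only [Finset.mem_filter] at hq
  simp only [Finset.mem_erase, Finset.mem_filter]
  exact ⟨fun h => hq.2.2 (by simp [h]), Nat.primeFactors_mono hm hn hq.1, hq.2.1⟩

lemma kpi_le_piPart (N : ℕ) : ∀ (G : Type u) [Group G] [Finite G] (σ : Set ℕ),
    pcount σ (Nat.card G) ≤ N →
    kpi σ G ≤ piPart σ (Nat.card G) := by
  induction N with
  | zero =>
    intro G _ _ σ hcard
    simp only [pcount] at hcard
    have hfilter : ((Nat.card G).primeFactors.filter (fun q => q ∈ σ)) = ∅ :=
      Finset.card_eq_zero.mp (Nat.le_zero.mp hcard)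
    have hone : ∀ c : SC σ G, c.1 = ConjClasses.mk 1 := by
      intro c
      have hsig : IsSig σ (rep c.1) := (carrier_isSig_iff _ _).mp c.2
      have hord : orderOf (rep c.1) = 1 := by
        by_contra h
        obtain ⟨q, hq, hqd⟩ := Nat.exists_prime_and_dvd h
        have hqG : q ∣ Nat.card G := hqd.trans (orderOf_dvd_natCard _)
        have hmem : q ∈ (Nat.card G).primeFactors.filter (fun q => q ∈ σ) := by
          rw [Finset.mem_filter, Nat.mem_primeFactors]
          exact ⟨⟨hq, hqG, Nat.card_pos.ne'⟩, hsig q hq hqd⟩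
        rw [hfilter] at hmem
        exact absurd hmem (Finset.notMem_empty q)
      rw [← mk_rep c.1, orderOf_eq_one_iff.mp hord]
    have hle : kpi σ G ≤ 1 := by
      have h := Nat.card_le_card_of_injective (α := SC σ G) (β := Unit) (fun _ => ())
        (fun a b _ => Subtype.ext ((hone a).trans (hone b).symm))
      simpa [kpi_eq] using h
    exact hle.trans (piPart_pos σ _)
  | succ N ih =>
    intro G _ _ σ hcard
    by_cases hN : pcount σ (Nat.card G) ≤ N
    · exact ih G σ hN
    · have hpos : 0 < pcount σ (Nat.card G) := by omega
      simp only [pcount] at hpos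
      obtain ⟨p, hpmem⟩ := Finset.card_pos.mp hpos
      rw [Finset.mem_filter] at hpmem
      obtain ⟨hpf, hpσ⟩ := hpmem
      have hp : p.Prime := Nat.prime_of_mem_primeFactors hpf
      have hG0 : Nat.card G ≠ 0 := Nat.card_pos.ne'
      have hB : ∀ H : Subgroup G, kpi (σ \ {p}) H ≤ piPart (σ \ {p}) (Nat.card G) := by
        intro H
        have hHdvd : Nat.card H ∣ Nat.card G := Subgroup.card_subgroup_dvd_card H
        have hcardle : pcount (σ \ {p}) (Nat.card H) ≤ N := by
          have h1 := pcount_lt hpσ hpf hHdvd hG0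
          omega
        refine (ih H (σ \ {p}) hcardle).trans ?_
        exact Nat.le_of_dvd (piPart_pos _ _) (piPart_mono hHdvd hG0)
      calc kpi σ G ≤ kpi ({p} : Set ℕ) G * piPart (σ \ {p}) (Nat.card G) :=
            kpi_le_sum σ {p} _ hB
        _ ≤ p ^ (Nat.card G).factorization p * piPart (σ \ {p}) (Nat.card G) :=
            Nat.mul_le_mul_right _ (kpi_singleton_le p hp)
        _ = piPart ({p} : Set ℕ) (Nat.card G) * piPart (σ \ {p}) (Nat.card G) := by
            rw [piPart_singleton]
        _ = piPart σ (Nat.card G) :=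
            piPart_mul_diff (Set.singleton_subset_iff.mpr hpσ) _

end Final

theorem stmt_6 {G : Type*} [Group G] [Finite G] (π μ : Set ℕ)
    (hπ : ∀ q ∈ π, q.Prime) (hμne : μ.Nonempty) (hμπ : μ ⊆ π) :
    (kpi π G : ℚ) / piPart π (Nat.card G) ≤ (kpi μ G : ℚ) / piPart μ (Nat.card G) ∧
      (kpi μ G : ℚ) / piPart μ (Nat.card G) ≤ 1 := by
  have hG0 : Nat.card G ≠ 0 := Nat.card_pos.ne'
  have hπpos : (0 : ℚ) < (piPart π (Nat.card G) : ℚ) := by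
    exact_mod_cast PiAux.piPart_pos π (Nat.card G)
  have hμpos : (0 : ℚ) < (piPart μ (Nat.card G) : ℚ) := by
    exact_mod_cast PiAux.piPart_pos μ (Nat.card G)
  constructor
  · rw [div_le_div_iff₀ hπpos hμpos]
    have h2 : kpi π G ≤ kpi μ G * piPart (π \ μ) (Nat.card G) :=
      kpi_le_sum π μ _ fun H =>
        (kpi_le_piPart _ H (π \ μ) le_rfl).trans
          (Nat.le_of_dvd (PiAux.piPart_pos _ _)
            (PiAux.piPart_mono (Subgroup.card_subgroup_dvd_card H) hG0))
    have h1 : kpi π G * piPart μ (Nat.card G) ≤ kpi μ G * piPart π (Nat.card G) := by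
      calc kpi π G * piPart μ (Nat.card G)
          ≤ kpi μ G * piPart (π \ μ) (Nat.card G) * piPart μ (Nat.card G) :=
            Nat.mul_le_mul_right _ h2
        _ = kpi μ G * (piPart μ (Nat.card G) * piPart (π \ μ) (Nat.card G)) := by ring
        _ = kpi μ G * piPart π (Nat.card G) := by rw [PiAux.piPart_mul_diff hμπ]
    exact_mod_cast h1
  · rw [div_le_one hμpos]
    exact_mod_cast kpi_le_piPart _ G μ le_rfl
end

section
/- Let G be a finite non-abelian p-group. Then the commuting probability d(G) = k(G)/|G| satisfies d(G) < (p+1)/p². -/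
theorem stmt_7 {G : Type*} [Group G] [Finite G] (p : ℕ) [Fact p.Prime]
    (hG : IsPGroup p G) (hna : ∃ a b : G, a * b ≠ b * a) :
    (Nat.card (ConjClasses G) : ℚ) / Nat.card G < (p + 1) / p ^ 2 := by
  classical
  cases nonempty_fintype G
  obtain ⟨a, b, hab⟩ := hna
  have hp : p.Prime := Fact.out
  -- the quotient by the center is not cyclic
  have hnc : ¬ IsCyclic (G ⧸ Subgroup.center G) := by
    intro h
    exact hab (commutative_of_cyclic_center_quotient
      (QuotientGroup.mk' (Subgroup.center G)) (by simp [QuotientGroup.ker_mk']) a b)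
  -- the quotient by the center has cardinality at least p^2
  have hq : p ^ 2 ≤ Nat.card (G ⧸ Subgroup.center G) := by
    obtain ⟨m, hm⟩ := IsPGroup.iff_card.mp (hG.to_quotient (Subgroup.center G))
    rcases Nat.lt_or_ge m 2 with hm2 | hm2
    · interval_cases m
      · exact absurd (@isCyclic_of_subsingleton _ _
          (Nat.card_eq_one_iff_unique.mp (by simpa using hm)).1) hnc
      · exact absurd (isCyclic_of_prime_card (p := p) (by simpa using hm)) hnc
    · rw [hm]
      exact Nat.pow_le_pow_right hp.pos hm2
  have hcardZ : p ^ 2 * Nat.card (Subgroup.center G) ≤ Nat.card G := by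
    rw [Subgroup.card_eq_card_quotient_mul_card_subgroup (Subgroup.center G)]
    exact Nat.mul_le_mul_right _ hq
  -- class equation data
  set Z := Nat.card (Subgroup.center G) with hZdef
  set N := Nat.card G with hNdef
  set k := Nat.card (ConjClasses G) with hkdef
  have hclass : Z + ∑ᶠ x ∈ ConjClasses.noncenter G, Nat.card x.carrier = N :=
    Group.nat_card_center_add_sum_card_noncenter_eq_card G
  -- rewrite the finsum as a finset sum
  have hsum : ∑ᶠ x ∈ ConjClasses.noncenter G, Nat.card x.carrier
      = ∑ x ∈ (ConjClasses.noncenter G).toFinset, Nat.card x.carrier := by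
    apply finsum_mem_coe_finset (s := (ConjClasses.noncenter G).toFinset)
      (f := fun x => Nat.card x.carrier) |>.symm.trans ?_ |>.symm
    congr 1
    simp
  -- each noncentral class has size at least p
  have hbig : ∀ x ∈ (ConjClasses.noncenter G).toFinset, p ≤ Nat.card x.carrier := by
    intro x hx
    rw [Set.mem_toFinset, ConjClasses.mem_noncenter] at hx
    obtain ⟨g, rfl⟩ := x.exists_rep
    have hdvd : Nat.card (ConjClasses.mk g).carrier ∣ N := by
      rw [← ConjAct.orbit_eq_carrier_conjClasses]
      have h1 := MulAction.card_orbit_mul_card_stabilizer_eq_card_group (ConjAct G) g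
      have h2 : Fintype.card (ConjAct G) = Fintype.card G :=
        Fintype.card_congr ConjAct.ofConjAct.toEquiv
      rw [hNdef, Nat.card_eq_fintype_card, Nat.card_eq_fintype_card, ← h2]
      exact ⟨_, h1.symm⟩
    have hne1 : Nat.card (ConjClasses.mk g).carrier ≠ 1 := by
      intro h1
      obtain ⟨c, hc⟩ := Nat.card_eq_one_iff_exists.mp h1
      exact hx.not_subsingleton (fun u hu v hv => by
        have := hc ⟨u, hu⟩; have := hc ⟨v, hv⟩
        simp_all [Subtype.ext_iff])
    -- a divisor of p^n other than 1 is at least p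
    obtain ⟨n, hn⟩ := IsPGroup.iff_card.mp hG
    rw [hNdef, hn] at hdvd
    have hpd : p ∣ Nat.card (ConjClasses.mk g).carrier := by
      have hqp : (Nat.card (ConjClasses.mk g).carrier).minFac ∣ p :=
        (Nat.minFac_prime hne1).dvd_of_dvd_pow ((Nat.minFac_dvd _).trans hdvd)
      have : (Nat.card (ConjClasses.mk g).carrier).minFac = p :=
        (Nat.prime_dvd_prime_iff_eq (Nat.minFac_prime hne1) hp).mp hqp
      exact this ▸ Nat.minFac_dvd _
    have hpos : 0 < Nat.card (ConjClasses.mk g).carrier := by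
      have : Nonempty (ConjClasses.mk g).carrier := ⟨⟨g, ConjClasses.mem_carrier_mk⟩⟩
      exact Nat.card_pos
    exact Nat.le_of_dvd hpos hpd
  -- count: k = Z + number of noncentral classes
  set m := (ConjClasses.noncenter G).toFinset.card with hmdef
  have hkm : k = Z + m := by
    have h1 : Z = Nat.card ((ConjClasses.noncenter G)ᶜ : Set (ConjClasses G)) :=
      Nat.card_congr ((ConjClasses.mk_bijOn G).equiv _)
    have h2 : Nat.card ((ConjClasses.noncenter G)ᶜ : Set (ConjClasses G))
        + Nat.card (ConjClasses.noncenter G) = k := by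
      simp only [Nat.card_eq_fintype_card, hkdef]
      rw [Fintype.card_compl_set]
      have hle : Fintype.card (ConjClasses.noncenter G : Set (ConjClasses G))
          ≤ Fintype.card (ConjClasses G) :=
        Fintype.card_le_of_injective Subtype.val Subtype.val_injective
      omega
    have h3 : Nat.card (ConjClasses.noncenter G : Set (ConjClasses G)) = m := by
      rw [Nat.card_eq_fintype_card, hmdef, Set.toFinset_card]
    omega
  -- lower bound on the sum
  have hS : m * p ≤ ∑ x ∈ (ConjClasses.noncenter G).toFinset, Nat.card x.carrier := by
    calc m * p = (ConjClasses.noncenter G).toFinset.card • p := by rw [smul_eq_mul]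
      _ ≤ _ := Finset.card_nsmul_le_sum _ _ p hbig
  -- combine everything
  have hZpos : 1 ≤ Z := Nat.one_le_iff_ne_zero.mpr (Nat.card_pos (α := Subgroup.center G)).ne'
  have hp2 : 2 ≤ p := hp.two_le
  rw [hsum] at hclass
  have hkey : p ^ 2 * k < (p + 1) * N := by nlinarith [hclass, hS, hkm, hcardZ, hZpos, hp2]
  have hNpos : 0 < N := Nat.card_pos
  rw [div_lt_div_iff₀ (by exact_mod_cast hNpos) (by positivity)]
  have hQ : (p : ℚ) ^ 2 * k < ((p : ℚ) + 1) * N := by exact_mod_cast hkey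
  linarith
end

section
/- Let G be a finite group that does not have a normal Sylow p-subgroup for some prime p dividing |G|. Then the commuting probability d(G) = k(G)/|G| is at most 1/p. -/
open Subgroup MulAction

-- relindex ≤ index for finite groups
lemma my_relindex_le_index {G : Type*} [Group G] [Finite G] (H K : Subgroup G) :
    H.relIndex K ≤ H.index := by
  rw [Subgroup.relIndex, Subgroup.index_eq_card, Subgroup.index_eq_card]
  apply Nat.card_le_card_of_injective
    (fun q => Quotient.map' (Subtype.val) (fun a b hab => by
      rw [QuotientGroup.leftRel_apply] at hab ⊢
      exact hab) q)
  intro a b hab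
  induction a using Quotient.inductionOn' with | h a =>
  induction b using Quotient.inductionOn' with | h b =>
  simp only [Quotient.map'_mk''] at hab
  have hm : (↑a : G)⁻¹ * ↑b ∈ H := QuotientGroup.leftRel_apply.mp (Quotient.exact' hab)
  exact Quotient.sound' (QuotientGroup.leftRel_apply.mpr
    (by simpa [Subgroup.mem_subgroupOf] using hm))

-- Lemma A: quotient monotonicity
lemma my_commProb_le_quotient {G : Type*} [Group G] [Finite G] (N : Subgroup G) [N.Normal] :
    commProb G ≤ commProb (G ⧸ N) := by
  rw [commProb_def, commProb_def]
  have hN : (0:ℚ) < (Nat.card N : ℚ) := by exact_mod_cast Nat.card_pos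
  have hQ : (0:ℚ) < ((Nat.card (G ⧸ N) : ℚ)) := by exact_mod_cast Nat.card_pos
  have hcard : (Nat.card G : ℚ) = (Nat.card (G ⧸ N) : ℚ) * (Nat.card N : ℚ) := by
    exact_mod_cast (Subgroup.card_eq_card_quotient_mul_card_subgroup N)
  have key : Nat.card { q : G × G // Commute q.1 q.2 } ≤
      Nat.card { q : (G ⧸ N) × (G ⧸ N) // Commute q.1 q.2 } * (Nat.card N * Nat.card N) := by
    have := Nat.card_le_card_of_injective
      (f := fun (q : { q : G × G // Commute q.1 q.2 }) =>
        ((⟨(QuotientGroup.mk q.1.1, QuotientGroup.mk q.1.2), by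
            have := q.2
            simp only [Commute, SemiconjBy] at this ⊢
            rw [← QuotientGroup.mk_mul, ← QuotientGroup.mk_mul, this]⟩ :
            { q : (G ⧸ N) × (G ⧸ N) // Commute q.1 q.2 }),
          ((⟨((QuotientGroup.mk q.1.1 : G ⧸ N)).out⁻¹ * q.1.1, by
              rw [← QuotientGroup.eq]
              simp⟩ : N),
           (⟨((QuotientGroup.mk q.1.2 : G ⧸ N)).out⁻¹ * q.1.2, by
              rw [← QuotientGroup.eq]
              simp⟩ : N)))) ?_
    · exact this.trans_eq (by rw [Nat.card_prod, Nat.card_prod])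
    · rintro ⟨⟨a₁, a₂⟩, ha⟩ ⟨⟨b₁, b₂⟩, hb⟩ hab
      simp only [Prod.mk.injEq, Subtype.mk.injEq, Subtype.ext_iff] at hab
      obtain ⟨⟨h1, h2⟩, h3, h4⟩ := hab
      have e1 : a₁ = b₁ := by
        have := h3
        rw [h1] at this
        exact mul_left_cancel this
      have e2 : a₂ = b₂ := by
        have := h4
        rw [h2] at this
        exact mul_left_cancel this
      simp [e1, e2]
  calc (Nat.card { q : G × G // Commute q.1 q.2 } : ℚ) / (Nat.card G : ℚ)^2
      ≤ ((Nat.card { q : (G ⧸ N) × (G ⧸ N) // Commute q.1 q.2 } * (Nat.card N * Nat.card N) : ℕ) : ℚ) / (Nat.card G:ℚ)^2 := by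
        apply div_le_div_of_nonneg_right ?_ (by positivity)
        · exact_mod_cast key
      _ = _ := by
        push_cast
        rw [hcard]
        field_simp

lemma my_commProb_le_subgroup {G : Type*} [Group G] [Finite G] (H : Subgroup G) :
    commProb G ≤ commProb H := by
  classical
  cases nonempty_fintype G
  let K : Subgroup (ConjAct G) := H.map (ConjAct.toConjAct : G ≃* ConjAct G).toMonoidHom
  let e : H ≃* K := Subgroup.equivMapOfInjective H _ (MulEquiv.injective _)
  haveI : Fintype K := Fintype.ofFinite K
  haveI : Fintype (Quotient (orbitRel K G)) := Fintype.ofFinite _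
  haveI : ∀ a : K, Fintype (fixedBy G a) := fun a => Fintype.ofFinite _
  haveI : Fintype H := Fintype.ofFinite H
  -- step 1
  have step1 : Nat.card (ConjClasses G) ≤ Nat.card (Quotient (orbitRel K G)) := by
    apply Nat.card_le_card_of_surjective
      (f := fun (ω : Quotient (orbitRel K G)) => Quotient.liftOn' ω ConjClasses.mk
        (fun a b hab => by
          obtain ⟨k, hk⟩ := hab
          have : (ConjAct.ofConjAct (k : ConjAct G)) * b * (ConjAct.ofConjAct (k : ConjAct G))⁻¹ = a := by
            rw [← hk]; rfl
          exact (ConjClasses.mk_eq_mk_iff_isConj.mpr (isConj_iff.mpr ⟨_, this⟩)).symm))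
    intro c
    obtain ⟨g, rfl⟩ := ConjClasses.mk_surjective c
    exact ⟨Quotient.mk'' g, rfl⟩
  -- Burnside
  have burnside : (∑ a : K, Fintype.card (fixedBy G a)) =
      Fintype.card (Quotient (orbitRel K G)) * Fintype.card K :=
    MulAction.sum_card_fixedBy_eq_card_orbits_mul_card_group K G
  -- identification of fixed points with centralizers
  have hfix : ∀ h : H, (fixedBy G ((e h : K) : ConjAct G) : Set G) =
      (centralizer {(h : G)} : Subgroup G) := by
    intro h
    ext x
    have : ((e h : K) : ConjAct G) = ConjAct.toConjAct (h : G) := rfl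
    simp only [mem_fixedBy, this, ConjAct.toConjAct_smul, SetLike.mem_coe,
      Subgroup.mem_centralizer_iff, Set.mem_singleton_iff, forall_eq]
    constructor
    · intro hx
      have := congrArg (· * (h : G)) hx
      simpa [mul_assoc] using this
    · intro hx
      rw [hx]; group
  -- centralizer bound
  have hcent : ∀ h : H, Nat.card (centralizer {(h : G)} : Subgroup G) ≤
      H.index * Nat.card ((H ⊓ centralizer {(h : G)} : Subgroup G)) := by
    intro h
    set C := (centralizer {(h : G)} : Subgroup G)
    have h1 : ((H ⊓ C).subgroupOf C).index * Nat.card ((H ⊓ C).subgroupOf C) = Nat.card C :=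
      Subgroup.index_mul_card _
    have h2 : Nat.card ((H ⊓ C).subgroupOf C) = Nat.card (H ⊓ C : Subgroup G) :=
      Nat.card_congr (Subgroup.subgroupOfEquivOfLe inf_le_right).toEquiv
    have h3 : ((H ⊓ C).subgroupOf C).index = (H ⊓ C).relIndex C := rfl
    have h4 : (H ⊓ C).relIndex C = H.relIndex C := inf_relIndex_right H C
    calc Nat.card C = ((H ⊓ C).subgroupOf C).index * Nat.card ((H ⊓ C).subgroupOf C) := h1.symm
      _ = H.relIndex C * Nat.card (H ⊓ C : Subgroup G) := by rw [h2, h3, h4]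
      _ ≤ H.index * Nat.card (H ⊓ C : Subgroup G) :=
          Nat.mul_le_mul_right _ (my_relindex_le_index H C)
  -- commuting pairs in H
  have hpairs : ∀ h : H, Nat.card {y : H // Commute h y} =
      Nat.card ((H ⊓ centralizer {(h : G)} : Subgroup G)) := by
    intro h
    apply Nat.card_congr
    refine ⟨fun y => ⟨(y.1 : G), Subgroup.mem_inf.mpr ⟨y.1.2, Subgroup.mem_centralizer_iff.mpr ?_⟩⟩,
            fun z => ⟨⟨(z : G), (Subgroup.mem_inf.mp z.2).1⟩, Subtype.ext ?_⟩,
            fun y => by ext; rfl, fun z => by ext; rfl⟩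
    · intro g hg
      rw [Set.mem_singleton_iff] at hg
      subst hg
      exact congrArg Subtype.val y.2
    · have := (Subgroup.mem_inf.mp z.2).2
      rw [Subgroup.mem_centralizer_iff] at this
      simpa using (this _ rfl)
  have hsum : (∑ h : H, Nat.card {y : H // Commute h y}) =
      Nat.card (ConjClasses H) * Nat.card H := by
    rw [← card_comm_eq_card_conjClasses_mul_card]
    rw [Nat.card_eq_fintype_card,
      Fintype.card_congr (Equiv.subtypeProdEquivSigmaSubtype (fun (a b : H) => Commute a b)),
      Fintype.card_sigma]
    simp [Nat.card_eq_fintype_card]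
  -- chain
  have main : Nat.card (ConjClasses G) * Nat.card H ≤
      H.index * (Nat.card (ConjClasses H) * Nat.card H) := by
    calc Nat.card (ConjClasses G) * Nat.card H
        ≤ Nat.card (Quotient (orbitRel K G)) * Nat.card H :=
          Nat.mul_le_mul_right _ step1
      _ = Nat.card (Quotient (orbitRel K G)) * Nat.card K := by
          rw [Nat.card_congr e.toEquiv]
      _ = ∑ a : K, Nat.card (fixedBy G a) := by
          simp only [Nat.card_eq_fintype_card]
          rw [burnside]
      _ = ∑ h : H, Nat.card (fixedBy G ((e h : K) : ConjAct G)) := by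
          rw [← Equiv.sum_comp e.toEquiv]
          rfl
      _ = ∑ h : H, Nat.card (centralizer {(h : G)} : Subgroup G) := by
          apply Finset.sum_congr rfl
          intro h _
          rw [Nat.card_congr (Equiv.setCongr (hfix h))]
          rfl
      _ ≤ ∑ h : H, H.index * Nat.card ((H ⊓ centralizer {(h : G)} : Subgroup G)) :=
          Finset.sum_le_sum (fun h _ => hcent h)
      _ = H.index * ∑ h : H, Nat.card ((H ⊓ centralizer {(h : G)} : Subgroup G)) := by
          rw [Finset.mul_sum]
      _ = H.index * ∑ h : H, Nat.card {y : H // Commute h y} := by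
          congr 1
          exact (Finset.sum_congr rfl (fun h _ => (hpairs h).symm))
      _ = H.index * (Nat.card (ConjClasses H) * Nat.card H) := by rw [hsum]
  -- convert to commProb
  rw [commProb_def', commProb_def']
  have hG : (0:ℚ) < (Nat.card G : ℚ) := by exact_mod_cast Nat.card_pos
  have hH : (0:ℚ) < (Nat.card H : ℚ) := by exact_mod_cast Nat.card_pos
  rw [div_le_div_iff₀ hG hH]
  have hGH : (Nat.card G : ℚ) = (H.index : ℚ) * (Nat.card H : ℚ) := by
    exact_mod_cast (Subgroup.index_mul_card H).symm
  have main' : (Nat.card (ConjClasses G) : ℚ) * Nat.card H ≤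
      (H.index : ℚ) * (Nat.card (ConjClasses H) * Nat.card H) := by exact_mod_cast main
  calc (Nat.card (ConjClasses G) : ℚ) * Nat.card H
      ≤ (H.index : ℚ) * (Nat.card (ConjClasses H) * Nat.card H) := main'
    _ = (Nat.card (ConjClasses H) : ℚ) * Nat.card G := by rw [hGH]; ring


-- Sylow subgroups are contained in normal subgroups of index coprime to p
lemma my_sylow_le_of_not_dvd_index {G : Type*} [Group G] [Finite G] {p : ℕ} [Fact p.Prime]
    (K : Subgroup G) [K.Normal] (hK : ¬ p ∣ K.index) (P : Sylow p G) : (P : Subgroup G) ≤ K := by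
  have hmap : (P : Subgroup G).map (QuotientGroup.mk' K) = ⊥ := by
    have hpg : IsPGroup p ((P : Subgroup G).map (QuotientGroup.mk' K)) :=
      P.2.map (QuotientGroup.mk' K)
    obtain ⟨n, hn⟩ := IsPGroup.iff_card.mp hpg
    rcases Nat.eq_zero_or_pos n with h0 | h0
    · rw [← Subgroup.card_eq_one, hn, h0, pow_zero]
    · exfalso
      apply hK
      have hdvd : Nat.card ((P : Subgroup G).map (QuotientGroup.mk' K)) ∣ Nat.card (G ⧸ K) :=
        Subgroup.card_subgroup_dvd_card _
    -- p ∣ p^n ∣ card (G ⧸ K) = K.index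
      rw [Subgroup.index_eq_card]
      exact dvd_trans (dvd_trans (dvd_pow_self p h0.ne') (hn ▸ dvd_refl _)) hdvd
  rw [Subgroup.map_eq_bot_iff, QuotientGroup.ker_mk'] at hmap
  exact hmap

-- Frattini-type: Sylow inside a normal subgroup that normalizes it is normal
lemma my_sylow_normal_of_le_normalizer {G : Type*} [Group G] [Finite G] {p : ℕ} [Fact p.Prime]
    (K : Subgroup G) [K.Normal] (P : Sylow p G) (hPK : (P : Subgroup G) ≤ K)
    (hN : K ≤ Subgroup.normalizer ((P : Subgroup G) : Set G)) : (P : Subgroup G).Normal := by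
  rw [← Subgroup.normalizer_eq_top_iff]
  have := Sylow.normalizer_sup_eq_top' P hPK
  rw [← P.coe_coe] at this
  rwa [sup_of_le_left hN] at this

universe u

lemma my_main (p : ℕ) [Fact p.Prime] : ∀ (n : ℕ) (G : Type u) [Group G] [Finite G],
    Nat.card G = n → p ∣ n → (∀ P : Sylow p G, ¬ (P : Subgroup G).Normal) →
    commProb G ≤ 1 / p := by
  intro n
  induction n using Nat.strong_induction_on with
  | _ n ih =>
  intro G _ _ hcard hdvd hnn
  classical
  have hp : p.Prime := Fact.out
  obtain ⟨P⟩ : Nonempty (Sylow p G) := inferInstance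
  subst hcard
  by_cases hZ : Subgroup.center G = ⊥
  swap
  · -- Case 1 : nontrivial center, pass to G ⧸ Z
    set Z := Subgroup.center G with hZdef
    have hdvdQ : p ∣ Nat.card (G ⧸ Z) := by
      by_contra hpq
      have hle : (P : Subgroup G) ≤ Z := by
        apply my_sylow_le_of_not_dvd_index Z _ P
        rwa [Subgroup.index_eq_card]
      refine hnn P ⟨fun x hx g => ?_⟩
      have hc := Subgroup.mem_center_iff.mp (hle hx)
      have : g * x * g⁻¹ = x := by rw [hc g]; group
      rwa [this]
    have hcardfact : Nat.card G = Nat.card (G ⧸ Z) * Nat.card Z :=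
      Subgroup.card_eq_card_quotient_mul_card_subgroup Z
    have hltQ : Nat.card (G ⧸ Z) < Nat.card G := by
      rw [hcardfact]
      have h2 : 1 < Nat.card Z := (Subgroup.one_lt_card_iff_ne_bot Z).mpr hZ
      have hqpos : 0 < Nat.card (G ⧸ Z) := Nat.card_pos
      exact lt_mul_of_one_lt_right hqpos h2
    have hnnQ : ∀ Q : Sylow p (G ⧸ Z), ¬ (Q : Subgroup (G ⧸ Z)).Normal := by
      intro Q hQ
      haveI := Sylow.unique_of_normal Q hQ
      have hPQ : (P.mapSurjective (QuotientGroup.mk'_surjective Z) : Sylow p (G ⧸ Z)) = Q :=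
        Subsingleton.elim _ _
      have hP' : ((P : Subgroup G).map (QuotientGroup.mk' Z)).Normal := by
        have := hPQ ▸ hQ
        rwa [← Sylow.coe_mapSurjective (QuotientGroup.mk'_surjective Z) P]
      have hK : (((P : Subgroup G).map (QuotientGroup.mk' Z)).comap
          (QuotientGroup.mk' Z)).Normal := hP'.comap _
      have hKeq : ((P : Subgroup G).map (QuotientGroup.mk' Z)).comap (QuotientGroup.mk' Z)
          = (P : Subgroup G) ⊔ Z := by
        rw [Subgroup.comap_map_eq, QuotientGroup.ker_mk']
      rw [hKeq] at hK
      apply hnn P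
      apply my_sylow_normal_of_le_normalizer ((P : Subgroup G) ⊔ Z) P le_sup_left
      apply sup_le (Subgroup.le_normalizer (H := (P : Subgroup G)))
      intro z hz
      rw [Subgroup.mem_normalizer_iff]
      intro x
      have hc := Subgroup.mem_center_iff.mp hz
      have hzx : z * x * z⁻¹ = x := by rw [(hc x).symm]; group
      rw [hzx]
    calc commProb G ≤ commProb (G ⧸ Z) := my_commProb_le_quotient Z
      _ ≤ 1 / p := ih _ hltQ (G ⧸ Z) rfl hdvdQ hnnQ
  · by_cases hsmall : ∃ g : G, g ≠ 1 ∧ (Subgroup.centralizer {g}).index < p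
    · -- Case 2 : small noncentral class, pass to normal core of centralizer
      obtain ⟨g, hg1, hglt⟩ := hsmall
      set C := Subgroup.centralizer {g} with hCdef
      set K := C.normalCore with hKdef
      have hKC : K ≤ C := Subgroup.normalCore_le C
      -- K.index divides Nat.factorial C.index
      have hfac : K.index ∣ Nat.factorial C.index := by
        rw [hKdef, Subgroup.normalCore_eq_ker, Subgroup.index_ker]
        have h1 : Nat.card (MulAction.toPermHom G (G ⧸ C)).range ∣
            Nat.card (Equiv.Perm (G ⧸ C)) := Subgroup.card_subgroup_dvd_card _
        have h2 : Nat.card (Equiv.Perm (G ⧸ C)) = Nat.factorial (Nat.card (G ⧸ C)) := by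
          haveI : Fintype (G ⧸ C) := Fintype.ofFinite _
          rw [Nat.card_eq_fintype_card, Nat.card_eq_fintype_card, Fintype.card_perm]
        rw [h2, ← Subgroup.index_eq_card] at h1
        exact h1
      have hpK : ¬ p ∣ K.index := by
        intro hdK
        have : p ∣ Nat.factorial C.index := hdK.trans hfac
        have := (Nat.Prime.dvd_factorial hp).mp this
        omega
      have hPK : (P : Subgroup G) ≤ K := my_sylow_le_of_not_dvd_index K hpK P
      have hCne : C ≠ ⊤ := by
        intro htop
        apply hg1
        have hgc : g ∈ Subgroup.center G := by
          rw [Subgroup.mem_center_iff]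
          intro x
          have hx : x ∈ C := htop ▸ Subgroup.mem_top x
          exact (Subgroup.mem_centralizer_iff.mp hx g rfl).symm
        rwa [hZ, Subgroup.mem_bot] at hgc
      have hKne : K ≠ ⊤ := fun h => hCne (top_le_iff.mp (h ▸ hKC))
      have hKlt : Nat.card K < Nat.card G := by
        have hfactor : K.index * Nat.card K = Nat.card G := Subgroup.index_mul_card K
        have hne1 : K.index ≠ 1 := fun h => hKne (Subgroup.index_eq_one.mp h)
        have hne0 : K.index ≠ 0 := Subgroup.index_ne_zero_of_finite
        have h2 : 2 ≤ K.index := by omega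
        have hKpos : 0 < Nat.card K := Nat.card_pos
        nlinarith
      have hdvdK : p ∣ Nat.card K := by
        have h1 : p ∣ K.index * Nat.card K := by
          rw [Subgroup.index_mul_card K]; exact hdvd
        exact (hp.dvd_mul.mp h1).resolve_left hpK
      have hnnK : ∀ Q : Sylow p K, ¬ (Q : Subgroup K).Normal := by
        intro Q hQ
        haveI := Sylow.unique_of_normal Q hQ
        have hPQ : P.subtype hPK = Q := Subsingleton.elim _ _
        have hsub : (((P : Subgroup G).subgroupOf K)).Normal := by
          have := hPQ ▸ hQ
          rwa [Sylow.coe_subtype] at this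
        have hnorm : K ≤ Subgroup.normalizer ((P : Subgroup G) : Set G) :=
          Subgroup.le_normalizer_of_normal_subgroupOf hPK
        exact hnn P (my_sylow_normal_of_le_normalizer K P hPK hnorm)
      calc commProb G ≤ commProb K := my_commProb_le_subgroup K
        _ ≤ 1 / p := ih _ hKlt K rfl hdvdK hnnK
    · -- Case 3 : all nontrivial classes have size ≥ p
      push_neg at hsmall
      haveI : Fintype G := Fintype.ofFinite G
      -- every nontrivial class has size ≥ p
      have hclass : ∀ x : ConjClasses G, x ≠ ConjClasses.mk 1 → p ≤ x.carrier.toFinset.card := by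
        intro x hx
        obtain ⟨g, rfl⟩ := ConjClasses.mk_surjective x
        have hg1 : g ≠ 1 := by
          rintro rfl; exact hx rfl
        have hindex : p ≤ (Subgroup.centralizer {g}).index := hsmall g hg1
        -- class size = index of centralizer
        have horb : (ConjClasses.mk g).carrier.toFinset.card =
            Nat.card (orbit (ConjAct G) g) := by
          rw [Set.toFinset_card, ← Nat.card_eq_fintype_card]
          apply Nat.card_congr
          exact Equiv.setCongr (ConjAct.orbit_eq_carrier_conjClasses g).symm
        have h1 : Nat.card (orbit (ConjAct G) g) * Nat.card (stabilizer (ConjAct G) g) =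
            Nat.card (ConjAct G) := by
          haveI : Fintype (orbit (ConjAct G) g) := Fintype.ofFinite _
          simp only [Nat.card_eq_fintype_card]
          exact MulAction.card_orbit_mul_card_stabilizer_eq_card_group (ConjAct G) g
        have h2 : (stabilizer (ConjAct G) g).index * Nat.card (stabilizer (ConjAct G) g) =
            Nat.card (ConjAct G) := Subgroup.index_mul_card _
        have h3 : (Subgroup.centralizer {g}).index = (stabilizer (ConjAct G) g).index := by
          rw [Subgroup.centralizer_eq_comap_stabilizer]
          exact Subgroup.index_comap_of_surjective _ (MulEquiv.surjective _)
        have hstabpos : 0 < Nat.card (stabilizer (ConjAct G) g) := Nat.card_pos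
        have horbeq : Nat.card (orbit (ConjAct G) g) = (stabilizer (ConjAct G) g).index :=
          Nat.eq_of_mul_eq_mul_right hstabpos (h1.trans h2.symm)
        rw [horb, horbeq, ← h3]
        exact hindex
      -- counting
      set k := Fintype.card (ConjClasses G) with hk
      have hsum : (∑ x : ConjClasses G, x.carrier.toFinset.card) = Fintype.card G :=
        sum_conjClasses_card_eq_card G
      have hone : 1 ≤ (ConjClasses.mk (1 : G)).carrier.toFinset.card := by
        rw [Nat.one_le_iff_ne_zero, ← Nat.pos_iff_ne_zero, Finset.card_pos]
        exact ⟨1, Set.mem_toFinset.mpr ConjClasses.mem_carrier_mk⟩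
      have hbound : (k - 1) * p + 1 ≤ Fintype.card G := by
        rw [← hsum, ← Finset.sum_erase_add Finset.univ _ (Finset.mem_univ (ConjClasses.mk (1:G)))]
        have hcount : (Finset.univ.erase (ConjClasses.mk (1:G))).card = k - 1 := by
          rw [Finset.card_erase_of_mem (Finset.mem_univ _), Finset.card_univ]
        have hms : (Finset.univ.erase (ConjClasses.mk (1:G))).card • p ≤
            ∑ x ∈ Finset.univ.erase (ConjClasses.mk (1:G)), x.carrier.toFinset.card := by
          apply Finset.card_nsmul_le_sum
          intro x hxmem
          exact hclass x (Finset.ne_of_mem_erase hxmem)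
        rw [hcount, smul_eq_mul] at hms
        omega
      -- conclude p * k ≤ card G
      have hpk : p * k ≤ Fintype.card G := by
        obtain ⟨m, hm⟩ : p ∣ Fintype.card G := by rwa [← Nat.card_eq_fintype_card]
        have hkpos : 0 < k := Fintype.card_pos
        have hppos : 0 < p := hp.pos
        rw [hm] at hbound
        have h1 : (k - 1) * p < m * p := by
          calc (k - 1) * p < (k - 1) * p + 1 := Nat.lt_succ_self _
            _ ≤ p * m := hbound
            _ = m * p := Nat.mul_comm p m
        have h2 : k - 1 < m := Nat.lt_of_mul_lt_mul_right h1
        have h3 : k ≤ m := by omega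
        calc p * k ≤ p * m := Nat.mul_le_mul_left p h3
          _ = Fintype.card G := hm.symm
      rw [commProb_def', div_le_div_iff₀ (by exact_mod_cast Nat.card_pos)
        (by exact_mod_cast hp.pos), one_mul]
      have hcards : Nat.card (ConjClasses G) = k := Nat.card_eq_fintype_card
      have hcardG : Nat.card G = Fintype.card G := Nat.card_eq_fintype_card
      rw [hcards, hcardG]
      exact_mod_cast (Nat.mul_comm p k ▸ hpk)

theorem stmt_8 {G : Type*} [Group G] [Finite G] (p : ℕ) [Fact p.Prime]
    (hdvd : p ∣ Nat.card G) (h : ∀ P : Sylow p G, ¬ (P : Subgroup G).Normal) :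
    (Nat.card (ConjClasses G) : ℚ) / Nat.card G ≤ 1 / p := by
  have := my_main p (Nat.card G) G rfl hdvd h
  rwa [commProb_def'] at this
end

section
/- Let G be a finite group with abelian Sylow p-subgroup P, and suppose G has no normal p-complement and that every nontrivial x ∈ P satisfies |x^G ∩ P| ≥ 2 (e.g., when Z*_p(G) = 1). Then k_p(G) ≤ (|P|+1)/2, and hence d_p(G) = k_p(G)/|P| ≤ (p+1)/(2p). -/
theorem stmt_10 {G : Type*} [Group G] [Finite G] (p : ℕ) [Fact p.Prime]
    (P : Sylow p G) (hab : IsMulCommutative ↥(P : Subgroup G))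
    (hnc : ¬ ∃ N : Subgroup G, N.Normal ∧ ¬ p ∣ Nat.card N ∧ ∃ k : ℕ, N.index = p ^ k)
    (hcl : ∀ x ∈ (P : Subgroup G), x ≠ 1 →
      2 ≤ Nat.card ({y : G | IsConj x y} ∩ (P : Subgroup G) : Set G)) :
    (kp p G : ℚ) ≤ (Nat.card ↥(P : Subgroup G) + 1) / 2 ∧
      (kp p G : ℚ) / Nat.card ↥(P : Subgroup G) ≤ (p + 1) / (2 * p) := by
  classical
  have : Fintype G := Fintype.ofFinite G
  set S : Finset (ConjClasses G) :=
    Finset.univ.filter (fun c => ∀ g ∈ c.carrier, ∃ n : ℕ, orderOf g = p ^ n) with hS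
  have hkp : kp p G = S.card := by
    rw [kp, Nat.card_eq_fintype_card, Fintype.card_subtype]
  -- every class in S has a representative in P
  have hrep : ∀ c ∈ S, ∃ x ∈ (P : Subgroup G), ConjClasses.mk x = c := by
    intro c hc
    rw [hS, Finset.mem_filter] at hc
    obtain ⟨g, rfl⟩ := ConjClasses.mk_surjective c
    have hg : g ∈ (ConjClasses.mk g).carrier := by
      rw [ConjClasses.mem_carrier_iff_mk_eq]
    obtain ⟨n, hn⟩ := hc.2 g hg
    have hpg : IsPGroup p (Subgroup.zpowers g) := by
      apply IsPGroup.of_card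
      rw [Nat.card_zpowers, hn]
    obtain ⟨Q, hQ⟩ := hpg.exists_le_sylow
    obtain ⟨h, hh⟩ := MulAction.exists_smul_eq G Q P
    refine ⟨h * g * h⁻¹, ?_, ?_⟩
    · have hm : h * g * h⁻¹ ∈ ((h • Q : Sylow p G) : Set G) := by
        rw [Sylow.coe_smul]
        exact ⟨g, hQ (Subgroup.mem_zpowers g), rfl⟩
      rw [← hh]
      exact hm
    · rw [ConjClasses.mk_eq_mk_iff_isConj]
      exact (isConj_iff.2 ⟨h, rfl⟩).symm
  set f : ConjClasses G → Finset G := fun c => (c.carrier ∩ (P : Subgroup G) : Set G).toFinset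
    with hf
  have hdisj : ∀ c ∈ (S : Set (ConjClasses G)), ∀ d ∈ (S : Set (ConjClasses G)), c ≠ d →
      Disjoint (f c) (f d) := by
    intro c _ d _ hcd
    simp only [hf, Finset.disjoint_left, Set.mem_toFinset]
    rintro a ⟨ha, -⟩ ⟨hb, -⟩
    rw [ConjClasses.mem_carrier_iff_mk_eq] at ha hb
    exact hcd (ha ▸ hb ▸ rfl)
  have hsum : ∑ c ∈ S, (f c).card ≤ Nat.card ↥(P : Subgroup G) := by
    rw [← Finset.card_biUnion (fun c hc d hd h => hdisj c hc d hd h)]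
    calc (S.biUnion f).card ≤ ((P : Subgroup G) : Set G).toFinset.card := by
          apply Finset.card_le_card
          intro a ha
          obtain ⟨c, _, hc⟩ := Finset.mem_biUnion.1 ha
          rw [Set.mem_toFinset] at hc ⊢
          exact hc.2
      _ = Nat.card ↥(P : Subgroup G) := by
          rw [Set.toFinset_card, Nat.card_eq_fintype_card]
          rfl
  have hone : (1 : ConjClasses G) ∈ S := by
    rw [hS, Finset.mem_filter]
    refine ⟨Finset.mem_univ _, ?_⟩
    intro g hg
    rw [ConjClasses.one_eq_mk_one, ConjClasses.mem_carrier_iff_mk_eq,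
      ConjClasses.mk_eq_mk_iff_isConj] at hg
    rw [isConj_one_left] at hg
    exact ⟨0, by simp [hg]⟩
  have hlow : ∀ c ∈ S.erase 1, 2 ≤ (f c).card := by
    intro c hc
    have hc1 : c ≠ 1 := (Finset.mem_erase.1 hc).1
    obtain ⟨x, hxP, hxc⟩ := hrep c (Finset.mem_of_mem_erase hc)
    have hx1 : x ≠ 1 := by
      rintro rfl
      exact hc1 (by rw [← hxc, ConjClasses.one_eq_mk_one])
    have h2 := hcl x hxP hx1
    have : ({y : G | IsConj x y} : Set G) = c.carrier := by
      ext y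
      rw [Set.mem_setOf_eq, ConjClasses.mem_carrier_iff_mk_eq, ← hxc,
        ConjClasses.mk_eq_mk_iff_isConj, isConj_comm]
    rw [this] at h2
    calc 2 ≤ Nat.card (c.carrier ∩ (P : Subgroup G) : Set G) := h2
      _ = (f c).card := by rw [hf, Set.toFinset_card, Nat.card_eq_fintype_card]
  have hmain : 2 * S.card ≤ Nat.card ↥(P : Subgroup G) + 1 := by
    have h1le : 1 ≤ (f 1).card := by
      rw [Finset.one_le_card]
      refine ⟨1, ?_⟩
      rw [Set.mem_toFinset]
      exact ⟨by rw [ConjClasses.mem_carrier_iff_mk_eq, ← ConjClasses.one_eq_mk_one],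
        (P : Subgroup G).one_mem⟩
    have hsum2 : (f 1).card + ∑ c ∈ S.erase 1, (f c).card = ∑ c ∈ S, (f c).card :=
      Finset.add_sum_erase S (fun c => (f c).card) hone
    have hsum3 : 2 * (S.erase 1).card ≤ ∑ c ∈ S.erase 1, (f c).card := by
      calc 2 * (S.erase 1).card = ∑ _c ∈ S.erase 1, 2 := by
            rw [Finset.sum_const, smul_eq_mul, mul_comm]
        _ ≤ _ := Finset.sum_le_sum hlow
    have hcard : S.card = (S.erase 1).card + 1 :=
      (Finset.card_erase_add_one hone).symm
    rw [hcard]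
    have h := hsum2 ▸ hsum
    linarith [hsum3, h1le, h]
  rw [hkp]
  have hPpos : 0 < Nat.card ↥(P : Subgroup G) := Nat.card_pos
  have hpleP : p ≤ Nat.card ↥(P : Subgroup G) := by
    have hpdvd : p ∣ Nat.card G := by
      by_contra hpd
      exact hnc ⟨⊤, inferInstance, by rwa [Nat.card_congr Subgroup.topEquiv.toEquiv], 0,
        by simp [Subgroup.index_top]⟩
    have := P.card_eq_multiplicity
    rw [this]
    calc p = p ^ 1 := (pow_one p).symm
      _ ≤ _ := Nat.pow_le_pow_right (Fact.out : p.Prime).pos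
          (by
            rw [← Nat.Prime.pow_dvd_iff_le_factorization (Fact.out : p.Prime)
              (Nat.card_pos.ne')]
            simpa using hpdvd)
  constructor
  · rw [le_div_iff₀ (by norm_num : (0:ℚ) < 2)]
    calc (S.card : ℚ) * 2 = (2 * S.card : ℕ) := by push_cast; ring
      _ ≤ ((Nat.card ↥(P : Subgroup G) + 1 : ℕ) : ℚ) := by exact_mod_cast hmain
      _ = _ := by push_cast; ring
  · have hp0 : (0:ℚ) < p := by exact_mod_cast (Fact.out : p.Prime).pos
    rw [div_le_div_iff₀ (by exact_mod_cast hPpos) (by positivity)]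
    have h1 : (S.card : ℚ) * (2 * p) = (2 * S.card : ℕ) * p := by push_cast; ring
    rw [h1]
    calc ((2 * S.card : ℕ) : ℚ) * p ≤ (Nat.card ↥(P : Subgroup G) + 1) * p := by
          apply mul_le_mul_of_nonneg_right _ hp0.le
          exact_mod_cast hmain
      _ ≤ (p + 1) * Nat.card ↥(P : Subgroup G) := by
          have hm : (p : ℚ) ≤ Nat.card ↥(P : Subgroup G) := by exact_mod_cast hpleP
          nlinarith
end

section
/- Let p be an odd prime and G a finite group with Sylow p-subgroup P. If d_p(G) = k_p(G)/|P| ≥ (p+1)/(2p), then P is abelian. -/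
lemma kp_le_card_conjClasses {G : Type*} [Group G] [Finite G] (p : ℕ) [Fact p.Prime]
    (P : Sylow p G) : kp p G ≤ Nat.card (ConjClasses (P : Subgroup G)) := by
  classical
  set Q := (P : Subgroup G) with hQdef
  have hprop : ∀ c : ConjClasses Q, ∀ g ∈ (ConjClasses.map Q.subtype c).carrier,
      ∃ n : ℕ, orderOf g = p ^ n := by
    intro c g hg
    obtain ⟨x, rfl⟩ := ConjClasses.mk_surjective c
    have hx : (ConjClasses.map Q.subtype (ConjClasses.mk x)) = ConjClasses.mk (x : G) := rfl
    rw [hx, ConjClasses.mem_carrier_iff_mk_eq, ConjClasses.mk_eq_mk_iff_isConj] at hg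
    obtain ⟨u, hu⟩ := hg
    obtain ⟨n, hn⟩ := IsPGroup.iff_orderOf.mp P.2 x
    refine ⟨n, ?_⟩
    rw [hu.orderOf_eq, Subgroup.orderOf_coe, hn]
  set F : ConjClasses Q → {c : ConjClasses G // ∀ g ∈ c.carrier, ∃ n : ℕ, orderOf g = p ^ n} :=
    fun c => ⟨ConjClasses.map Q.subtype c, hprop c⟩ with hF
  have hsurj : Function.Surjective F := by
    rintro ⟨c, hc⟩
    obtain ⟨g, rfl⟩ := ConjClasses.mk_surjective c
    obtain ⟨n, hn⟩ := hc g ConjClasses.mem_carrier_mk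
    have hzp : IsPGroup p (Subgroup.zpowers g) := by
      rintro ⟨y, hy⟩
      refine ⟨n, ?_⟩
      obtain ⟨m, rfl⟩ := hy
      have : ((g ^ m) : G) ^ (p ^ n) = 1 := by
        rw [← zpow_natCast, ← zpow_mul, mul_comm, zpow_mul, zpow_natCast, ← hn,
          pow_orderOf_eq_one, one_zpow]
      ext
      simpa using this
    obtain ⟨R, hR⟩ := hzp.exists_le_sylow
    obtain ⟨x, hx⟩ := MulAction.exists_smul_eq G R P
    have hgR : g ∈ R := hR (Subgroup.mem_zpowers g)
    have hmem : x * g * x⁻¹ ∈ Q := by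
      rw [hQdef, ← hx, Sylow.coe_subgroup_smul]
      have := Subgroup.smul_mem_pointwise_smul g (MulAut.conj x) R hgR
      simpa using this
    refine ⟨ConjClasses.mk (⟨x * g * x⁻¹, hmem⟩ : Q), Subtype.ext ?_⟩
    show ConjClasses.mk (x * g * x⁻¹) = ConjClasses.mk g
    rw [ConjClasses.mk_eq_mk_iff_isConj, isConj_comm, isConj_iff]
    exact ⟨x, rfl⟩
  exact Nat.card_le_card_of_surjective F hsurj

lemma center_bound {H : Type*} [Group H] [Finite H] {p : ℕ} [Fact p.Prime]
    (hH : IsPGroup p H) (hnc : ¬ ∀ a b : H, a * b = b * a) :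
    p ^ 2 * Nat.card (Subgroup.center H) ≤ Nat.card H := by
  set Z := Subgroup.center H
  have hq : IsPGroup p (H ⧸ Z) := hH.to_quotient Z
  obtain ⟨m, hm⟩ := IsPGroup.iff_card.mp hq
  have hm2 : 2 ≤ m := by
    by_contra hlt
    interval_cases m
    · have : Z.index = 1 := by
        rw [Subgroup.index, hm, pow_zero]
      have : Z = ⊤ := Subgroup.index_eq_one.mp this
      exact hnc fun a b => by
        have ha : a ∈ Z := this ▸ Subgroup.mem_top a
        exact (Subgroup.mem_center_iff.mp ha b).symm
    · have : Nat.card (H ⧸ Z) = p := by rw [hm, pow_one]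
      have : IsCyclic (H ⧸ Z) := isCyclic_of_prime_card this
      exact hnc fun a b =>
        commutative_of_cyclic_center_quotient (QuotientGroup.mk' Z)
          (by rw [QuotientGroup.ker_mk']) a b
  have hdvd : p ^ 2 * Nat.card Z ∣ Nat.card H := by
    have : p ^ 2 ∣ Z.index := by
      rw [Subgroup.index, hm]
      exact pow_dvd_pow p hm2
    obtain ⟨c, hc⟩ := this
    exact ⟨c, by rw [← Z.card_mul_index, hc]; ring⟩
  exact Nat.le_of_dvd Nat.card_pos hdvd

lemma class_count_bound {H : Type*} [Group H] [Finite H] {p : ℕ} [Fact p.Prime]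
    (hH : IsPGroup p H) :
    p * Nat.card (ConjClasses H) + Nat.card (Subgroup.center H) ≤
      Nat.card H + p * Nat.card (Subgroup.center H) := by
  classical
  cases nonempty_fintype H
  have hp : p.Prime := Fact.out
  set s : Finset (ConjClasses H) := (ConjClasses.noncenter H).toFinset with hs
  -- class equation
  have hce : Fintype.card (Subgroup.center H) +
      ∑ x ∈ s, x.carrier.toFinset.card = Fintype.card H :=
    Group.card_center_add_sum_card_noncenter_eq_card H
  -- center card = card of complement
  have hzc : Fintype.card (Subgroup.center H) = sᶜ.card := by
    calc Fintype.card (Subgroup.center H)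
        = Fintype.card ((ConjClasses.noncenter H)ᶜ : Set _) :=
          Fintype.card_congr ((ConjClasses.mk_bijOn H).equiv _)
      _ = sᶜ.card := by rw [← Set.toFinset_card, Set.toFinset_compl]
  have hk : Fintype.card (ConjClasses H) = sᶜ.card + s.card := by
    rw [add_comm, Finset.card_add_card_compl]
  -- each noncentral class has size at least p
  have hsize : ∀ x ∈ s, p ≤ x.carrier.toFinset.card := by
    intro x hx
    obtain ⟨g, rfl⟩ := ConjClasses.mk_surjective x
    have hnt : (ConjClasses.mk g).carrier.Nontrivial := by
      rw [hs, Set.mem_toFinset, ConjClasses.mem_noncenter] at hx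
      exact hx
    have hdvd : (ConjClasses.mk g).carrier.toFinset.card ∣ Fintype.card H := by
      have horb : MulAction.orbit (ConjAct H) g = (ConjClasses.mk g).carrier :=
        ConjAct.orbit_eq_carrier_conjClasses g
      have h2 := MulAction.card_orbit_mul_card_stabilizer_eq_card_group (ConjAct H) g
      have : Fintype.card (MulAction.orbit (ConjAct H) g) ∣ Fintype.card (ConjAct H) :=
        ⟨_, h2.symm⟩
      rw [ConjAct.card] at this
      rw [Set.toFinset_card]
      convert this using 2
      exact congrArg _ horb.symm
    obtain ⟨n, hn⟩ := IsPGroup.iff_card.mp hH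
    rw [Nat.card_eq_fintype_card] at hn
    rw [hn] at hdvd
    obtain ⟨i, hi, hpi⟩ := (Nat.dvd_prime_pow hp).mp hdvd
    have h2 : 2 ≤ (ConjClasses.mk g).carrier.toFinset.card := by
      obtain ⟨a, ha, b, hb, hab⟩ := hnt
      exact Finset.one_lt_card.mpr ⟨a, Set.mem_toFinset.mpr ha, b, Set.mem_toFinset.mpr hb, hab⟩
    have hlt : 1 < p ^ i := by omega
    have hi1 : 1 ≤ i := by
      by_contra h
      simp only [not_le, Nat.lt_one_iff] at h
      subst h; simp at hlt
    rw [hpi]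
    calc p = p ^ 1 := (pow_one p).symm
    _ ≤ p ^ i := Nat.pow_le_pow_right hp.one_le hi1
  have hsum : p * s.card ≤ ∑ x ∈ s, x.carrier.toFinset.card := by
    calc p * s.card = ∑ _x ∈ s, p := by rw [Finset.sum_const, smul_eq_mul, mul_comm]
    _ ≤ _ := Finset.sum_le_sum hsize
  have h1 : Nat.card (ConjClasses H) = Fintype.card (ConjClasses H) := Nat.card_eq_fintype_card
  have h2 : Nat.card (Subgroup.center H) = Fintype.card (Subgroup.center H) :=
    Nat.card_eq_fintype_card
  have h3 : Nat.card H = Fintype.card H := Nat.card_eq_fintype_card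
  rw [h1, h2, h3, hk, hzc]
  have := hce
  rw [hzc] at this
  nlinarith [hsum, this]

theorem stmt_11 {G : Type*} [Group G] [Finite G] (p : ℕ) [Fact p.Prime]
    (hodd : Odd p) (P : Sylow p G)
    (hd : ((p : ℚ) + 1) / (2 * p) ≤ (kp p G : ℚ) / Nat.card ↥(P : Subgroup G)) :
    IsMulCommutative ↥(P : Subgroup G) := by
  by_contra hnc
  have hp : p.Prime := Fact.out
  have hp3 : 3 ≤ p := by
    obtain ⟨j, hj⟩ := hodd
    have := hp.two_le
    omega
  set Q := (P : Subgroup G) with hQdef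
  have hncomm : ¬ ∀ a b : ↥Q, a * b = b * a := by
    intro h
    exact hnc ⟨⟨fun a b => h a b⟩⟩
  have hB1 := center_bound (p := p) P.2 hncomm
  have hB2 := class_count_bound (p := p) (H := ↥Q) P.2
  have hA := kp_le_card_conjClasses p P
  set m := Nat.card ↥Q with hm
  set k := Nat.card (ConjClasses ↥Q) with hkk
  set z := Nat.card (Subgroup.center ↥Q) with hz
  set k' := kp p G with hk'
  have hm1 : 0 < m := Nat.card_pos
  have hz1 : 0 < z := Nat.card_pos
  have hppos : (0 : ℚ) < 2 * p := by positivity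
  rw [div_le_div_iff₀ hppos (by exact_mod_cast hm1)] at hd
  have c1 : (k' : ℚ) ≤ k := by exact_mod_cast hA
  have c2 : (p : ℚ) ^ 2 * z ≤ m := by exact_mod_cast hB1
  have c3 : (p : ℚ) * k + z ≤ m + p * z := by exact_mod_cast hB2
  have c4 : (3 : ℚ) ≤ p := by exact_mod_cast hp3
  have c5 : (1 : ℚ) ≤ m := by exact_mod_cast hm1
  have c6 : (1 : ℚ) ≤ z := by exact_mod_cast hz1
  have h1 : (p : ℚ) ^ 2 * (((p : ℚ) + 1) * m) ≤ p ^ 2 * (k' * (2 * p)) :=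
    mul_le_mul_of_nonneg_left hd (by positivity)
  have h2 : (p : ℚ) ^ 2 * ((p : ℚ) * k + z) ≤ p ^ 2 * (m + p * z) :=
    mul_le_mul_of_nonneg_left c3 (by positivity)
  have h3 : ((p : ℚ) - 1) * ((p : ℚ) ^ 2 * z) ≤ ((p : ℚ) - 1) * m :=
    mul_le_mul_of_nonneg_left c2 (by linarith)
  have h4 : 2 * (p : ℚ) ^ 3 * k' ≤ 2 * (p : ℚ) ^ 3 * k :=
    mul_le_mul_of_nonneg_left c1 (by positivity)
  nlinarith [h1, h2, h3, h4, mul_le_mul_of_nonneg_left c5 (by nlinarith : (0:ℚ) ≤ p^3 - p^2 - 2*p + 2)]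
end

section
/- Let G be a finite group of odd order and σ a nonempty set of primes with d_σ(G) ≥ 1/2. If G is a Frobenius group with elementary abelian kernel N of order p^k (p odd) and cyclic complement of prime order r ≠ p with r dividing p^k − 1, then d_p(G) = 1/r + (r−1)/(r p^k) and this quantity is strictly less than 1/2; hence no such Frobenius group satisfies d_p(G) ≥ 1/2. -/
theorem stmt_17 {G : Type*} [Group G] [Finite G] (p r k : ℕ)
    (hp : p.Prime) (hpodd : Odd p) (hr : r.Prime) (hrodd : Odd r) (hpr : r ≠ p)
    (hk : 1 ≤ k) (hdvd : r ∣ p ^ k - 1) (hGodd : Odd (Nat.card G))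
    (N : Subgroup G) (hNnorm : N.Normal) (hNcard : Nat.card N = p ^ k)
    (hNab : IsMulCommutative N) (hNelem : ∀ x ∈ N, x ^ p = 1)
    (hindex : N.index = r)
    (hfrob : ∀ x ∈ N, x ≠ 1 → Subgroup.centralizer {x} = N) :
    (kp p G : ℚ) / p ^ k = 1 / r + (r - 1) / (r * p ^ k) ∧
      (kp p G : ℚ) / p ^ k < 1 / 2 := by
  classical
  cases nonempty_fintype G
  have hp3 : 3 ≤ p := by
    rcases hp.two_le.lt_or_eq with h | h
    · omega
    · exfalso; rw [← h] at hpodd; exact (Nat.not_odd_iff_even.mpr even_two) hpodd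
  have hr3 : 3 ≤ r := by
    rcases hr.two_le.lt_or_eq with h | h
    · omega
    · exfalso; rw [← h] at hrodd; exact (Nat.not_odd_iff_even.mpr even_two) hrodd
  have hPodd : Odd (p ^ k) := hpodd.pow
  have hP3 : 3 ≤ p ^ k := le_trans hp3 (Nat.le_self_pow (by omega) p)
  have hcardG : Nat.card G = p ^ k * r := by
    rw [← N.card_mul_index, hNcard, hindex]
  -- p-elements are exactly elements of N
  have hmemN : ∀ g : G, (∃ n : ℕ, orderOf g = p ^ n) ↔ g ∈ N := by
    intro g
    constructor
    · rintro ⟨n, hn⟩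
      have h1 : orderOf (QuotientGroup.mk' N g) ∣ p ^ n := hn ▸ orderOf_map_dvd _ g
      have h2 : orderOf (QuotientGroup.mk' N g) ∣ r := by
        have := orderOf_dvd_natCard (QuotientGroup.mk' N g)
        rwa [← Subgroup.index, hindex] at this
      have hcop : Nat.Coprime r (p ^ n) :=
        Nat.Coprime.pow_right _ ((Nat.coprime_primes hr hp).mpr hpr)
      have : orderOf (QuotientGroup.mk' N g) ∣ 1 := hcop ▸ Nat.dvd_gcd h2 h1
      have : QuotientGroup.mk' N g = 1 := orderOf_eq_one_iff.mp (Nat.dvd_one.mp this)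
      rwa [← QuotientGroup.eq_one_iff]
    · intro hg
      have : orderOf g ∣ p := orderOf_dvd_of_pow_eq_one (hNelem g hg)
      rcases (Nat.dvd_prime hp).mp this with h | h
      · exact ⟨0, by simpa using h⟩
      · exact ⟨1, by simpa using h⟩
  -- the finset of classes contained in N
  set T : Finset (ConjClasses G) :=
    Finset.univ.filter (fun c => ∀ g ∈ c.carrier, g ∈ N) with hT
  have hkpT : kp p G = T.card := by
    rw [kp, Nat.card_eq_fintype_card, Fintype.card_subtype]
    congr 1
    exact Finset.filter_congr fun c _ => forall₂_congr fun g _ => hmemN g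
  -- fibers
  set F : ConjClasses G → Finset G :=
    fun c => Finset.univ.filter (fun g => ConjClasses.mk g = c) with hF
  -- the trivial class
  have h1T : ConjClasses.mk (1 : G) ∈ T := by
    rw [hT, Finset.mem_filter]
    refine ⟨Finset.mem_univ _, fun g hg => ?_⟩
    rw [ConjClasses.mem_carrier_iff_mk_eq, ConjClasses.mk_eq_mk_iff_isConj,
      isConj_comm, isConj_one_right] at hg
    rw [hg]; exact N.one_mem
  have hF1 : (F (ConjClasses.mk (1 : G))).card = 1 := by
    have : F (ConjClasses.mk (1 : G)) = {1} := by
      ext g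
      simp only [hF, Finset.mem_filter, Finset.mem_univ, true_and, Finset.mem_singleton,
        ConjClasses.mk_eq_mk_iff_isConj, isConj_one_left]
    rw [this, Finset.card_singleton]
  -- nontrivial classes in T have fiber of size r
  have hFr : ∀ c ∈ T, c ≠ ConjClasses.mk (1 : G) → (F c).card = r := by
    intro c hc hc1
    obtain ⟨g, rfl⟩ := ConjClasses.exists_rep c
    have hgN : g ∈ N := by
      rw [hT, Finset.mem_filter] at hc
      exact hc.2 g (ConjClasses.mem_carrier_iff_mk_eq.mpr rfl)
    have hg1 : g ≠ 1 := by
      rintro rfl; exact hc1 rfl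
    -- F (mk g) is the orbit of g under conjugation
    have horb : (F (ConjClasses.mk g) : Set G) = MulAction.orbit (ConjAct G) g := by
      rw [ConjAct.orbit_eq_carrier_conjClasses]
      ext x
      simp [hF, ConjClasses.mem_carrier_iff_mk_eq]
    have hcent : Subgroup.centralizer {g} = N := hfrob g hgN hg1
    have hstab : Nat.card (MulAction.stabilizer (ConjAct G) g) = p ^ k := by
      have hco := Subgroup.centralizer_eq_comap_stabilizer g
      have : Nat.card (Subgroup.centralizer {g}) =
          Nat.card (MulAction.stabilizer (ConjAct G) g) := by
        rw [hco]
        exact Nat.card_congr ((ConjAct.toConjAct (G := G)).toEquiv.subtypeEquiv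
          fun x => Iff.rfl)
      rw [← this, hcent, hNcard]
    have horbcard : Nat.card (MulAction.orbit (ConjAct G) g) = r := by
      have h := MulAction.card_orbit_mul_card_stabilizer_eq_card_group (ConjAct G) g
      have hG' : Nat.card (ConjAct G) = p ^ k * r := by
        rw [Nat.card_congr (ConjAct.ofConjAct (G := G)).toEquiv]
        rw [Nat.card_eq_fintype_card] at hcardG ⊢
        exact hcardG
      have h' : Nat.card (MulAction.orbit (ConjAct G) g) *
          Nat.card (MulAction.stabilizer (ConjAct G) g) = Nat.card (ConjAct G) := by
        simpa [Nat.card_eq_fintype_card] using h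
      rw [hstab, hG', mul_comm (p ^ k) r] at h'
      exact Nat.eq_of_mul_eq_mul_right (by positivity) h'
    have : (F (ConjClasses.mk g)).card = Nat.card (MulAction.orbit (ConjAct G) g) := by
      rw [← horb]
      simp [Nat.card_eq_finsetCard]
    rw [this, horbcard]
  -- partition N by classes
  set B : Finset G := Finset.univ.filter (fun g => g ∈ N) with hB
  have hBcard : B.card = p ^ k := by
    rw [hB, ← Fintype.card_subtype, ← Nat.card_eq_fintype_card]
    exact hNcard
  have hpart : B.card = ∑ c ∈ T, ((B.filter (fun g => ConjClasses.mk g = c)).card) := by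
    apply Finset.card_eq_sum_card_fiberwise
    intro g hg
    rw [hB, Finset.mem_coe, Finset.mem_filter] at hg
    rw [Finset.mem_coe, hT, Finset.mem_filter]
    refine ⟨Finset.mem_univ _, fun h hh => ?_⟩
    rw [ConjClasses.mem_carrier_iff_mk_eq, ConjClasses.mk_eq_mk_iff_isConj] at hh
    obtain ⟨c, hc⟩ := isConj_iff.mp hh
    have : h = c⁻¹ * g * c := by
      rw [← hc]; group
    rw [this]
    simpa using hNnorm.conj_mem g hg.2 c⁻¹
  have hfib : ∀ c ∈ T, B.filter (fun g => ConjClasses.mk g = c) = F c := by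
    intro c hc
    ext g
    simp only [Finset.mem_filter, hB, hF, Finset.mem_univ, true_and]
    constructor
    · rintro ⟨_, h⟩; exact h
    · intro h
      refine ⟨?_, h⟩
      rw [hT, Finset.mem_filter] at hc
      exact hc.2 g (ConjClasses.mem_carrier_iff_mk_eq.mpr h)
  have hsum : p ^ k = ∑ c ∈ T, (F c).card := by
    rw [← hBcard, hpart]
    exact Finset.sum_congr rfl fun c hc => by rw [hfib c hc]
  -- split off the trivial class
  have hsplit : p ^ k = 1 + (T.card - 1) * r := by
    rw [hsum, ← Finset.add_sum_erase _ _ h1T, hF1]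
    congr 1
    rw [Finset.sum_congr rfl (fun c hc => hFr c (Finset.mem_of_mem_erase hc)
      (Finset.ne_of_mem_erase hc)), Finset.sum_const, Finset.card_erase_of_mem h1T,
      smul_eq_mul]
  have hTpos : 1 ≤ T.card := Finset.card_pos.mpr ⟨_, h1T⟩
  set m : ℕ := T.card - 1 with hm
  have hTm : T.card = m + 1 := by omega
  have hkey : p ^ k = 1 + m * r := hsplit
  have hm2 : 2 ≤ m := by
    have hmne : m ≠ 0 := by rintro h; rw [h] at hkey; omega
    have : Even (m * r) := by
      rcases Nat.even_or_odd (m * r) with h | h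
      · exact h
      · exfalso
        have : Even (p ^ k) := by rw [hkey]; exact Odd.add_odd odd_one h
        exact (Nat.not_odd_iff_even.mpr this) hPodd
    have hmev : Even m := by
      rcases Nat.even_mul.mp this with h | h
      · exact h
      · exact absurd h (Nat.not_even_iff_odd.mpr hrodd)
    obtain ⟨t, ht⟩ := hmev
    omega
  -- rational arithmetic
  have hkpm : (kp p G : ℚ) = m + 1 := by rw [hkpT, hTm]; push_cast; ring
  have hkeyQ : ((p : ℚ)) ^ k = 1 + m * r := by
    have := congrArg (Nat.cast : ℕ → ℚ) hkey
    push_cast at this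
    exact this
  have hr0 : (r : ℚ) ≠ 0 := by positivity
  have hP0 : ((p : ℚ)) ^ k ≠ 0 := by
    have : (0:ℚ) < (p:ℚ) := by exact_mod_cast hp.pos
    positivity
  have hrQ : (3 : ℚ) ≤ r := by exact_mod_cast hr3
  have hmQ : (2 : ℚ) ≤ m := by exact_mod_cast hm2
  constructor
  · rw [hkpm]
    field_simp
    linear_combination (-1 : ℚ) * hkeyQ
  · rw [hkpm, div_lt_div_iff₀ (by positivity) (by norm_num)]
    nlinarith [hkeyQ, hrQ, hmQ]
end
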